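/- arXiv:1807.09706 — 10 statements merged into one kernel-verified Lean document; each statement's English description precedes it below -/
import Mathlib

section
/- Let c ∈ ℝ and let π : ℝ → [0,∞) be a measurable function that is symmetric and unimodal about c, i.e., π(c − x) = π(c + x) for all x ∈ ℝ and x ↦ π(c + x) is nonincreasing on [0,∞). Let d : ℝ → [0,∞) be measurable, even, and quasiconvex. Then for every x̂ ∈ ℝ, ∫_ℝ d(e − c) π(e) de ≤ ∫_ℝ d(e − x̂) π(e) de, where the integrals are Lebesgue integrals with values in [0,∞]. -/
open MeasureTheory Set
open scoped ENNReal

lemma even_qc_mono {d : ℝ → ℝ} (hdeven : ∀ x, d (-x) = d x)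
    (hdqc : QuasiconvexOn ℝ Set.univ d) : MonotoneOn d (Set.Ici 0) := by
  rw [quasiconvexOn_iff_le_max] at hdqc
  intro u hu v hv huv
  simp only [Set.mem_Ici] at hu hv
  rcases eq_or_lt_of_le hv with h0 | h0
  · have : u = 0 := le_antisymm (h0 ▸ huv) hu
    rw [this, ← h0]
  · have ha : (0:ℝ) ≤ (v - u) / (2 * v) := div_nonneg (by linarith) (by linarith)
    have hb : (0:ℝ) ≤ (v + u) / (2 * v) := div_nonneg (by linarith) (by linarith)
    have hab : (v - u) / (2 * v) + (v + u) / (2 * v) = 1 := by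
      field_simp; ring
    have hrep : ((v - u) / (2 * v)) • (-v) + ((v + u) / (2 * v)) • v = u := by
      simp only [smul_eq_mul]
      field_simp
      ring
    have := hdqc.2 (Set.mem_univ (-v)) (Set.mem_univ v) ha hb hab
    rw [hrep, hdeven, max_self] at this
    exact this

lemma pt_ineq {c : ℝ} {π : ℝ → ℝ}
    (hπsym : ∀ x : ℝ, π (c - x) = π (c + x))
    (hπmono : AntitoneOn (fun x : ℝ => π (c + x)) (Set.Ici (0 : ℝ)))
    {s u : ℝ} (h : |u| ≤ s) : π (c + s) ≤ π (c + u) := by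
  have habs : π (c + u) = π (c + |u|) := by
    rcases abs_cases u with ⟨h1, _⟩ | ⟨h1, _⟩
    · rw [h1]
    · rw [h1, ← hπsym u, sub_eq_add_neg]
  rw [habs]
  exact hπmono (Set.mem_Ici.2 (abs_nonneg u)) (Set.mem_Ici.2 ((abs_nonneg u).trans h)) h

lemma core_shift {c : ℝ} {π : ℝ → ℝ} (hπmeas : Measurable π)
    (hπsym : ∀ x : ℝ, π (c - x) = π (c + x))
    (hπmono : AntitoneOn (fun x : ℝ => π (c + x)) (Set.Ici (0 : ℝ)))
    {m a : ℝ} (hm : 0 ≤ m) (ha : 0 ≤ a) :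
    ∫⁻ e in {e : ℝ | m < |e - c|}, ENNReal.ofReal (π e) ≤
      ∫⁻ e in {e : ℝ | m < |e - (c + a)|}, ENNReal.ofReal (π e) := by
  set t : ℝ := max (2 * m) a with ht
  have h2m : 2 * m ≤ t := le_max_left _ _
  have hat : a ≤ t := le_max_right _ _
  set L : Set ℝ := {e | m < |e - c|} with hL
  set R : Set ℝ := {e | m < |e - (c + a)|} with hR
  have hLm : MeasurableSet L :=
    measurableSet_lt measurable_const ((measurable_id.sub_const c).abs)
  have hRm : MeasurableSet R :=
    measurableSet_lt measurable_const ((measurable_id.sub_const (c + a)).abs)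
  set f : ℝ → ℝ≥0∞ := fun e => ENNReal.ofReal (π e) with hf
  have hfm : Measurable f := hπmeas.ennreal_ofReal
  have hmemLR : ∀ e ∈ L \ R, m < e - c ∧ a - m ≤ e - c ∧ e - c ≤ a + m := by
    intro e he
    obtain ⟨h1, h2⟩ := he
    have h2' : |e - (c + a)| ≤ m := not_lt.1 h2
    rw [abs_le] at h2'
    have h1' : m < |e - c| := h1
    rcases lt_abs.1 h1' with h | h
    · exact ⟨h, by linarith [h2'.1, h2'.2], by linarith [h2'.1, h2'.2]⟩
    · exfalso; linarith [h2'.1]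
  have key : ∫⁻ e in L \ R, f e ≤ ∫⁻ e in R \ L, f e := by
    have step1 : ∫⁻ e in L \ R, f e ≤ ∫⁻ e in L \ R, f (e - t) := by
      refine setLIntegral_mono (hfm.comp (measurable_id.sub_const t)) ?_
      intro e he
      obtain ⟨hs1, hs2, hs3⟩ := hmemLR e he
      have ht2 : t ≤ 2 * (e - c) := max_le (by linarith) (by linarith)
      have habs : |(e - c) - t| ≤ e - c := by
        rw [abs_le]
        constructor
        · linarith
        · linarith
      have := pt_ineq hπsym hπmono habs
      have he1 : c + (e - c) = e := by ring
      have he2 : c + ((e - c) - t) = e - t := by ring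
      rw [he1, he2] at this
      exact ENNReal.ofReal_le_ofReal this
    have step2 : ∫⁻ e in L \ R, f (e - t) = ∫⁻ y in (fun e => e - t) '' (L \ R), f y := by
      have hpre : (fun e : ℝ => e - t) ⁻¹' ((fun e => e - t) '' (L \ R)) = L \ R :=
        Set.preimage_image_eq _ (fun x y h => by simpa using h)
      conv_lhs => rw [← hpre]
      exact (measurePreserving_sub_right volume t).setLIntegral_comp_preimage_emb
        (MeasurableEquiv.subRight t).measurableEmbedding f _
    have step3 : ∫⁻ y in (fun e => e - t) '' (L \ R), f y ≤ ∫⁻ y in R \ L, f y := by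
      set B : Set ℝ := (fun e => e - t) '' (L \ R) with hB
      have hBsub : B \ (R \ L) ⊆ {c + (a + m - t)} := by
        intro y hy
        obtain ⟨e, he, hye⟩ := hy.1
        have hnot := hy.2
        have hye' : e - t = y := hye
        subst hye'
        obtain ⟨hs1, hs2, hs3⟩ := hmemLR e he
        rcases eq_or_lt_of_le hs3 with heq | hlt
        · simp only [Set.mem_singleton_iff]
          linarith
        · exfalso
          apply hnot
          have hstm : t - m ≤ e - c := by
            rcases max_choice (2 * m) a with hc | hc
            · rw [← ht] at hc; linarith
            · rw [← ht] at hc; linarith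
          constructor
          · show m < |(e - t) - (c + a)|
            refine lt_abs.2 (Or.inr ?_)
            linarith
          · show ¬ m < |(e - t) - c|
            rw [not_lt, abs_le]
            constructor
            · linarith
            · linarith
      have hBnull : volume (B \ (R \ L)) = 0 :=
        measure_mono_null hBsub (measure_singleton _)
      calc ∫⁻ y in B, f y ≤ ∫⁻ y in (R \ L) ∪ (B \ (R \ L)), f y := by
            refine lintegral_mono_set ?_
            intro y hy
            by_cases h : y ∈ R \ L
            · exact Or.inl h
            · exact Or.inr ⟨hy, h⟩
        _ ≤ (∫⁻ y in R \ L, f y) + ∫⁻ y in B \ (R \ L), f y := lintegral_union_le _ _ _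
        _ = ∫⁻ y in R \ L, f y := by
            rw [setLIntegral_measure_zero _ _ hBnull, add_zero]
    exact step1.trans (step2.trans_le step3)
  calc ∫⁻ e in L, f e = (∫⁻ e in L ∩ R, f e) + ∫⁻ e in L \ R, f e :=
        (lintegral_inter_add_diff f L hRm).symm
    _ ≤ (∫⁻ e in L ∩ R, f e) + ∫⁻ e in R \ L, f e := add_le_add_right key _
    _ = (∫⁻ e in R ∩ L, f e) + ∫⁻ e in R \ L, f e := by rw [Set.inter_comm]
    _ = ∫⁻ e in R, f e := lintegral_inter_add_diff f R hLm

lemma stepC {c : ℝ} {π : ℝ → ℝ} (hπmeas : Measurable π)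
    (hπsym : ∀ x : ℝ, π (c - x) = π (c + x))
    (hπmono : AntitoneOn (fun x : ℝ => π (c + x)) (Set.Ici (0 : ℝ)))
    {m : ℝ} (hm : 0 ≤ m) (x : ℝ) :
    ∫⁻ e in {e : ℝ | m < |e - c|}, ENNReal.ofReal (π e) ≤
      ∫⁻ e in {e : ℝ | m < |e - x|}, ENNReal.ofReal (π e) := by
  rcases le_total c x with hcx | hcx
  · have h := core_shift hπmeas hπsym hπmono hm (sub_nonneg.2 hcx) (a := x - c)
    rwa [show c + (x - c) = x by ring] at h
  · have hrefl : ∫⁻ e in {e : ℝ | m < |e - x|}, ENNReal.ofReal (π e)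
        = ∫⁻ e in {e : ℝ | m < |e - (c + (c - x))|}, ENNReal.ofReal (π e) := by
      have hmp : MeasurePreserving (fun e : ℝ => 2 * c - e) volume volume :=
        Measure.measurePreserving_sub_left volume (2 * c)
      have hemb : MeasurableEmbedding (fun e : ℝ => 2 * c - e) :=
        (MeasurableEquiv.subLeft (2 * c)).measurableEmbedding
      have hpre : (fun e : ℝ => 2 * c - e) ⁻¹' {e : ℝ | m < |e - x|}
          = {e : ℝ | m < |e - (c + (c - x))|} := by
        ext e
        simp only [Set.mem_preimage, Set.mem_setOf_eq]
        rw [show (2 * c - e) - x = -(e - (c + (c - x))) by ring, abs_neg]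
      have h := hmp.setLIntegral_comp_preimage_emb hemb
        (fun y => ENNReal.ofReal (π y)) {e : ℝ | m < |e - x|}
      rw [hpre] at h
      rw [← h]
      refine lintegral_congr fun e => ?_
      have hsy : π (2 * c - e) = π e := by
        have := hπsym (c - e)
        rw [show c - (c - e) = e by ring, show c + (c - e) = 2 * c - e by ring] at this
        exact this.symm
      rw [hsy]
    rw [hrefl]
    exact core_shift hπmeas hπsym hπmono hm (by linarith)

lemma stepB {c : ℝ} {π d : ℝ → ℝ} (hπmeas : Measurable π)
    (hπsym : ∀ x : ℝ, π (c - x) = π (c + x))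
    (hπmono : AntitoneOn (fun x : ℝ => π (c + x)) (Set.Ici (0 : ℝ)))
    (hdeven : ∀ x : ℝ, d (-x) = d x)
    (hdqc : QuasiconvexOn ℝ Set.univ d) (r x : ℝ) :
    ∫⁻ e in {e : ℝ | r < d (e - c)}, ENNReal.ofReal (π e) ≤
      ∫⁻ e in {e : ℝ | r < d (e - x)}, ENNReal.ofReal (π e) := by
  have hdabs : ∀ y : ℝ, d y = d |y| := by
    intro y
    rcases abs_cases y with ⟨h, _⟩ | ⟨h, _⟩
    · rw [h]
    · rw [h, hdeven]
  have hmono := even_qc_mono hdeven hdqc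
  by_cases hS : ∃ y : ℝ, r < d y
  · obtain ⟨y0, hy0⟩ := hS
    set T : Set ℝ := {u | 0 ≤ u ∧ r < d u} with hT
    have hTne : T.Nonempty := ⟨|y0|, abs_nonneg _, by rw [← hdabs]; exact hy0⟩
    have hTbdd : BddBelow T := ⟨0, fun u hu => hu.1⟩
    set m := sInf T with hmdef
    have hm0 : 0 ≤ m := le_csInf hTne fun u hu => hu.1
    have hAB : ∀ z : ℝ, {e : ℝ | r < d (e - z)} =ᵐ[volume] {e : ℝ | m < |e - z|} := by
      intro z
      rw [MeasureTheory.ae_eq_set]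
      constructor
      · refine measure_mono_null (t := ({z - m, z + m} : Set ℝ)) ?_ ?_
        · intro e he
          obtain ⟨h1, h2⟩ := he
          have hmem : |e - z| ∈ T := ⟨abs_nonneg _, by rw [← hdabs]; exact h1⟩
          have hle : m ≤ |e - z| := csInf_le hTbdd hmem
          have hge : |e - z| ≤ m := not_lt.1 h2
          have heq : |e - z| = m := le_antisymm hge hle
          rcases abs_cases (e - z) with ⟨ha, _⟩ | ⟨ha, _⟩
          · right; rw [Set.mem_singleton_iff]; rw [ha] at heq; linarith
          · left; rw [ha] at heq; linarith
        · exact (Set.toFinite _).measure_zero volume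
      · have hsub : {e : ℝ | m < |e - z|} ⊆ {e : ℝ | r < d (e - z)} := by
          intro e he
          obtain ⟨u, hu, hu2⟩ := exists_lt_of_csInf_lt hTne he
          have : d u ≤ d |e - z| :=
            hmono (Set.mem_Ici.2 hu.1) (Set.mem_Ici.2 (abs_nonneg _)) (le_of_lt hu2)
          show r < d (e - z)
          rw [hdabs]
          exact lt_of_lt_of_le hu.2 this
        rw [Set.diff_eq_empty.2 hsub]
        exact measure_empty
    calc ∫⁻ e in {e : ℝ | r < d (e - c)}, ENNReal.ofReal (π e)
        = ∫⁻ e in {e : ℝ | m < |e - c|}, ENNReal.ofReal (π e) := setLIntegral_congr (hAB c)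
      _ ≤ ∫⁻ e in {e : ℝ | m < |e - x|}, ENNReal.ofReal (π e) := stepC hπmeas hπsym hπmono hm0 x
      _ = ∫⁻ e in {e : ℝ | r < d (e - x)}, ENNReal.ofReal (π e) :=
          (setLIntegral_congr (hAB x)).symm
  · push_neg at hS
    have hempty : {e : ℝ | r < d (e - c)} = ∅ := by
      ext e
      simp only [Set.mem_setOf_eq, Set.mem_empty_iff_false, iff_false, not_lt]
      exact hS _
    rw [hempty]
    simp

/-- If `π` is a nonnegative measurable function on `ℝ`, symmetric and unimodal
about `c`, and `d` is a nonnegative measurable even quasiconvex distortion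
function, then `c` minimizes `xhat ↦ ∫ d(e - xhat) π(e) de`. -/
theorem su_belief_min_distortion (c : ℝ) (π d : ℝ → ℝ)
    (hπmeas : Measurable π) (hπnn : ∀ x : ℝ, 0 ≤ π x)
    (hπsym : ∀ x : ℝ, π (c - x) = π (c + x))
    (hπmono : AntitoneOn (fun x : ℝ => π (c + x)) (Set.Ici (0 : ℝ)))
    (hdmeas : Measurable d) (hdnn : ∀ x : ℝ, 0 ≤ d x)
    (hdeven : ∀ x : ℝ, d (-x) = d x)
    (hdqc : QuasiconvexOn ℝ Set.univ d) :
    ∀ xhat : ℝ,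
      ∫⁻ e : ℝ, ENNReal.ofReal (d (e - c) * π e) ≤
        ∫⁻ e : ℝ, ENNReal.ofReal (d (e - xhat) * π e) := by
  have layer : ∀ x : ℝ, ∫⁻ e : ℝ, ENNReal.ofReal (d (e - x) * π e)
      = ∫⁻ r in Set.Ioi (0:ℝ), ∫⁻ e in {e : ℝ | r < d (e - x)}, ENNReal.ofReal (π e) := by
    intro x
    set F : ℝ → ℝ → ℝ≥0∞ := fun e r =>
      (Set.Iio (d (e - x))).indicator (fun _ => ENNReal.ofReal (π e)) r with hF
    have h1 : ∀ e : ℝ, ∫⁻ r in Set.Ioi (0:ℝ), F e r = ENNReal.ofReal (d (e - x) * π e) := by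
      intro e
      rw [lintegral_indicator measurableSet_Iio, setLIntegral_const,
        Measure.restrict_apply measurableSet_Iio, Set.Iio_inter_Ioi, Real.volume_Ioo,
        sub_zero, ← ENNReal.ofReal_mul (hπnn e), mul_comm (π e)]
    have hFm : Measurable (Function.uncurry F) := by
      have heq : Function.uncurry F = fun p : ℝ × ℝ =>
          Set.indicator {q : ℝ × ℝ | q.2 < d (q.1 - x)}
            (fun q => ENNReal.ofReal (π q.1)) p := by
        funext p
        simp only [Function.uncurry, hF, Set.indicator_apply, Set.mem_Iio, Set.mem_setOf_eq]
      rw [heq]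
      exact Measurable.indicator ((hπmeas.comp measurable_fst).ennreal_ofReal)
        (measurableSet_lt measurable_snd (hdmeas.comp (measurable_fst.sub_const x)))
    have h2 : ∀ r : ℝ, ∫⁻ e : ℝ, F e r
        = ∫⁻ e in {e : ℝ | r < d (e - x)}, ENNReal.ofReal (π e) := by
      intro r
      have : (fun e : ℝ => F e r)
          = {e : ℝ | r < d (e - x)}.indicator (fun e => ENNReal.ofReal (π e)) := by
        funext e
        simp only [hF, Set.indicator_apply, Set.mem_Iio, Set.mem_setOf_eq]
      have hset : MeasurableSet {e : ℝ | r < d (e - x)} :=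
        measurableSet_lt measurable_const (hdmeas.comp (measurable_id.sub_const x))
      rw [this, lintegral_indicator hset]
    calc ∫⁻ e : ℝ, ENNReal.ofReal (d (e - x) * π e)
        = ∫⁻ e : ℝ, ∫⁻ r in Set.Ioi (0:ℝ), F e r := by
          refine lintegral_congr fun e => (h1 e).symm
      _ = ∫⁻ r in Set.Ioi (0:ℝ), ∫⁻ e : ℝ, F e r := lintegral_lintegral_swap hFm.aemeasurable
      _ = ∫⁻ r in Set.Ioi (0:ℝ), ∫⁻ e in {e : ℝ | r < d (e - x)}, ENNReal.ofReal (π e) := by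
          refine lintegral_congr fun r => h2 r
  intro xhat
  rw [layer c, layer xhat]
  exact lintegral_mono fun r => stepB hπmeas hπsym hπmono hdeven hdqc r xhat
end

section
/- Let π : ℝ → [0,∞) be even and nonincreasing on [0,∞), let φ : ℝ → ℝ be even and quasiconvex, and let q : ℝ → ℝ be nonincreasing with 0 ≤ q(u) ≤ 1 for all u. Then the function e ↦ π(e) · q(φ(e)) is even and nonincreasing on [0,∞). -/
/-- If `π` is nonnegative, even and nonincreasing on `[0,∞)`, `φ` is even and
quasiconvex, and `q` is nonincreasing with values in `[0,1]`, then
`e ↦ π e * q (φ e)` is even and nonincreasing on `[0,∞)`. -/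
theorem su_times_drop_prob (π φ q : ℝ → ℝ)
    (hπnn : ∀ x : ℝ, 0 ≤ π x)
    (hπeven : ∀ x : ℝ, π (-x) = π x)
    (hπmono : AntitoneOn π (Set.Ici (0 : ℝ)))
    (hφeven : ∀ x : ℝ, φ (-x) = φ x)
    (hφqc : QuasiconvexOn ℝ Set.univ φ)
    (hq : Antitone q)
    (hq0 : ∀ u : ℝ, 0 ≤ q u) (hq1 : ∀ u : ℝ, q u ≤ 1) :
    (∀ x : ℝ, π (-x) * q (φ (-x)) = π x * q (φ x)) ∧
      AntitoneOn (fun e : ℝ => π e * q (φ e)) (Set.Ici (0 : ℝ)) := by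
  have hφmono : ∀ a b : ℝ, 0 ≤ a → a ≤ b → φ a ≤ φ b := by
    intro a b ha hab
    have hb : (0:ℝ) ≤ b := ha.trans hab
    have hmem : a ∈ segment ℝ (-b) b := by
      rw [segment_eq_Icc (by linarith : -b ≤ b)]
      exact ⟨by linarith, hab⟩
    have hconv := hφqc (φ b)
    have h1 : (-b) ∈ {x ∈ Set.univ | φ x ≤ φ b} := ⟨trivial, (hφeven b).le⟩
    have h2 : b ∈ {x ∈ Set.univ | φ x ≤ φ b} := ⟨trivial, le_refl _⟩
    exact (hconv.segment_subset h1 h2 hmem).2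
  refine ⟨fun x => by rw [hπeven, hφeven], ?_⟩
  intro a ha b hb hab
  have h1 : π b ≤ π a := hπmono ha hb hab
  have h2 : q (φ b) ≤ q (φ a) := hq (hφmono a b ha hab)
  exact mul_le_mul h1 h2 (hq0 _) (hπnn _)
end

section
/- Let f, g : ℝ → [0,∞) be Lebesgue-measurable functions, each even (f(−x)=f(x), g(−x)=g(x)) and nonincreasing on [0,∞). Define the convolution h(x) = ∫_ℝ f(x − y) g(y) dy (Lebesgue integral with values in [0,∞]). Then h is even, and h is nonincreasing on [0,∞), i.e., for all 0 ≤ x₁ ≤ x₂, h(x₂) ≤ h(x₁). -/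
open MeasureTheory

private lemma lintegral_neg_eq_self' (φ : ℝ → ENNReal) :
    ∫⁻ x : ℝ, φ (-x) = ∫⁻ x : ℝ, φ x := by
  have := lintegral_map_equiv (μ := (volume : Measure ℝ)) φ (MeasurableEquiv.neg ℝ)
  simpa [Measure.map_neg_eq_self, MeasurableEquiv.neg] using this.symm

private lemma even_anti_le {F : ℝ → ℝ} (hFeven : ∀ x : ℝ, F (-x) = F x)
    (hFmono : AntitoneOn F (Set.Ici (0 : ℝ))) {a b : ℝ} (hab : |a| ≤ |b|) :
    F b ≤ F a := by
  have ha : F a = F |a| := by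
    rcases abs_choice a with h | h
    · rw [h]
    · rw [h, hFeven]
  have hb : F b = F |b| := by
    rcases abs_choice b with h | h
    · rw [h]
    · rw [h, hFeven]
  rw [ha, hb]
  exact hFmono (abs_nonneg a) (le_trans (abs_nonneg a) hab) hab

/-- Convolution of two nonnegative, even functions that are nonincreasing on
`[0,∞)` is even and nonincreasing on `[0,∞)` (symmetric unimodality is
preserved under convolution). -/
theorem su_convolution (f g : ℝ → ℝ)
    (hfmeas : Measurable f) (hgmeas : Measurable g)
    (hfnn : ∀ x : ℝ, 0 ≤ f x) (hgnn : ∀ x : ℝ, 0 ≤ g x)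
    (hfeven : ∀ x : ℝ, f (-x) = f x) (hgeven : ∀ x : ℝ, g (-x) = g x)
    (hfmono : AntitoneOn f (Set.Ici (0 : ℝ)))
    (hgmono : AntitoneOn g (Set.Ici (0 : ℝ)))
    (h : ℝ → ENNReal)
    (hh : ∀ x : ℝ, h x = ∫⁻ y : ℝ, ENNReal.ofReal (f (x - y) * g y)) :
    (∀ x : ℝ, h (-x) = h x) ∧
      (∀ x₁ x₂ : ℝ, 0 ≤ x₁ → x₁ ≤ x₂ → h x₂ ≤ h x₁) := by
  constructor
  · intro x
    rw [hh, hh]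
    calc ∫⁻ y : ℝ, ENNReal.ofReal (f (-x - y) * g y)
        = ∫⁻ y : ℝ, ENNReal.ofReal (f (-x - (-y)) * g (-y)) :=
          (lintegral_neg_eq_self' fun y => ENNReal.ofReal (f (-x - y) * g y)).symm
      _ = ∫⁻ y : ℝ, ENNReal.ofReal (f (x - y) * g y) := by
          congr 1; funext y
          rw [hgeven, show -x - -y = -(x - y) by ring, hfeven]
  · intro x₁ x₂ hx₁ hx₁₂
    set c : ℝ := (x₁ + x₂) / 2 with hc
    set d : ℝ := (x₂ - x₁) / 2 with hd
    have hc0 : 0 ≤ c := by rw [hc]; linarith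
    have hd0 : 0 ≤ d := by rw [hd]; linarith
    -- pointwise key inequality
    have key : ∀ u : ℝ,
        f (d - u) * g (c + u) + f (d + u) * g (c - u) ≤
        f (d + u) * g (c + u) + f (d - u) * g (c - u) := by
      intro u
      rcases le_or_gt 0 u with hu | hu
      · have h1 : f (d + u) ≤ f (d - u) := by
          apply even_anti_le hfeven hfmono
          rw [show |d + u| = d + u from abs_of_nonneg (by linarith)]
          exact abs_le.mpr ⟨by linarith, by linarith⟩
        have h2 : g (c + u) ≤ g (c - u) := by
          apply even_anti_le hgeven hgmono
          rw [show |c + u| = c + u from abs_of_nonneg (by linarith)]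
          exact abs_le.mpr ⟨by linarith, by linarith⟩
        nlinarith [mul_nonneg (sub_nonneg.mpr h1) (sub_nonneg.mpr h2)]
      · have h1 : f (d - u) ≤ f (d + u) := by
          apply even_anti_le hfeven hfmono
          rw [show |d - u| = d - u from abs_of_nonneg (by linarith)]
          exact abs_le.mpr ⟨by linarith, by linarith⟩
        have h2 : g (c - u) ≤ g (c + u) := by
          apply even_anti_le hgeven hgmono
          rw [show |c - u| = c - u from abs_of_nonneg (by linarith)]
          exact abs_le.mpr ⟨by linarith, by linarith⟩
        nlinarith [mul_nonneg (sub_nonneg.mpr h1) (sub_nonneg.mpr h2)]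
    -- measurability helpers
    -- the four integrals
    have hA : h x₂ = ∫⁻ u : ℝ, ENNReal.ofReal (f (d - u) * g (c + u)) := by
      rw [hh]
      rw [← lintegral_add_left_eq_self (fun y => ENNReal.ofReal (f (x₂ - y) * g y)) c]
      congr 1; funext u
      rw [show x₂ - (c + u) = d - u by rw [hc, hd]; ring]
    have hB : h x₂ = ∫⁻ u : ℝ, ENNReal.ofReal (f (d + u) * g (c - u)) := by
      rw [hA, ← lintegral_neg_eq_self' fun u => ENNReal.ofReal (f (d - u) * g (c + u))]
      congr 1
      try (funext u; rw [show d - -u = d + u by ring, show c + -u = c - u by ring])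
    have hA' : h x₁ = ∫⁻ u : ℝ, ENNReal.ofReal (f (d + u) * g (c + u)) := by
      rw [hh]
      rw [← lintegral_add_left_eq_self (fun y => ENNReal.ofReal (f (x₁ - y) * g y)) c]
      congr 1; funext u
      rw [show x₁ - (c + u) = -(d + u) by rw [hc, hd]; ring, hfeven]
    have hB' : h x₁ = ∫⁻ u : ℝ, ENNReal.ofReal (f (d - u) * g (c - u)) := by
      rw [hA', ← lintegral_neg_eq_self' fun u => ENNReal.ofReal (f (d + u) * g (c + u))]
      congr 1
      try (funext u; rw [show d + -u = d - u by ring, show c + -u = c - u by ring])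
    have m1 : Measurable fun u : ℝ => ENNReal.ofReal (f (d - u) * g (c + u)) :=
      ((hfmeas.comp (measurable_const.sub measurable_id)).mul
        (hgmeas.comp (measurable_const.add measurable_id))).ennreal_ofReal
    have m3 : Measurable fun u : ℝ => ENNReal.ofReal (f (d + u) * g (c + u)) :=
      ((hfmeas.comp (measurable_const.add measurable_id)).mul
        (hgmeas.comp (measurable_const.add measurable_id))).ennreal_ofReal
    have hsum : h x₂ + h x₂ ≤ h x₁ + h x₁ := by
      nth_rewrite 1 [hA]; nth_rewrite 1 [hB]
      nth_rewrite 1 [hA']; nth_rewrite 1 [hB']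
      rw [← lintegral_add_left m1, ← lintegral_add_left m3]
      apply lintegral_mono
      intro u
      dsimp only
      rw [← ENNReal.ofReal_add (mul_nonneg (hfnn _) (hgnn _)) (mul_nonneg (hfnn _) (hgnn _)),
        ← ENNReal.ofReal_add (mul_nonneg (hfnn _) (hgnn _)) (mul_nonneg (hfnn _) (hgnn _))]
      exact ENNReal.ofReal_le_ofReal (key u)
    have h2 : (2 : ENNReal) * h x₂ ≤ 2 * h x₁ := by
      rw [two_mul, two_mul]; exact hsum
    exact (ENNReal.mul_le_mul_iff_right (by norm_num) (by norm_num)).mp h2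
end

section
/- Let c ∈ ℝ, let M ≥ 0, let π, ξ : ℝ → [0,∞) be measurable with ∫_ℝ π(e) de = ∫_ℝ ξ(e) de = 1, and let φ : ℝ → [0, M] be measurable. Then there exists a function θ : ℝ → [0, M] such that x ↦ θ(c + x) is even and θ is quasiconvex on ℝ, and for every u ∈ ℝ, ∫_{{e : θ(e) ≤ u}} ξ(e) de = ∫_{{e : φ(e) ≤ u}} π(e) de. -/
open MeasureTheory

/-- Every prescription `φ : ℝ → [0, M]` can be rearranged, relative to a pair
of probability densities `(π, ξ)`, into a prescription `θ : ℝ → [0, M]` that is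
symmetric about `c` and quasiconvex, with matching lower-level-set masses. -/
theorem exists_sqc_rearrangement (c M : ℝ) (hM : 0 ≤ M)
    (π ξ : ℝ → ℝ)
    (hπmeas : Measurable π) (hξmeas : Measurable ξ)
    (hπnn : ∀ x : ℝ, 0 ≤ π x) (hξnn : ∀ x : ℝ, 0 ≤ ξ x)
    (hπone : ∫ e : ℝ, π e = 1) (hξone : ∫ e : ℝ, ξ e = 1)
    (φ : ℝ → ℝ) (hφmeas : Measurable φ)
    (hφrange : ∀ e : ℝ, φ e ∈ Set.Icc (0 : ℝ) M) :
    ∃ θ : ℝ → ℝ,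
      (∀ e : ℝ, θ e ∈ Set.Icc (0 : ℝ) M) ∧
      (∀ x : ℝ, θ (c - x) = θ (c + x)) ∧
      QuasiconvexOn ℝ Set.univ θ ∧
      (∀ u : ℝ, ∫ e in {e : ℝ | θ e ≤ u}, ξ e = ∫ e in {e : ℝ | φ e ≤ u}, π e) := by
  classical
  -- integrability
  have hπint : Integrable π := by
    by_contra h
    rw [integral_undef h] at hπone; norm_num at hπone
  have hξint : Integrable ξ := by
    by_contra h
    rw [integral_undef h] at hξone; norm_num at hξone
  set G : ℝ → ℝ := fun u => ∫ e in {e : ℝ | φ e ≤ u}, π e with hGdef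
  set H : ℝ → ℝ := fun t => ∫ e in Set.Icc (c - t) (c + t), ξ e with hHdef
  have hφlev : ∀ u : ℝ, MeasurableSet {e : ℝ | φ e ≤ u} := fun u =>
    hφmeas measurableSet_Iic
  -- Monotonicity of G
  have hGmono : Monotone G := by
    intro a b hab
    refine setIntegral_mono_set hπint.integrableOn
      (Filter.Eventually.of_forall hπnn) (Filter.Eventually.of_forall ?_)
    intro e he
    exact le_trans he hab
  -- Monotonicity of H
  have hHmono : Monotone H := by
    intro a b hab
    refine setIntegral_mono_set hξint.integrableOn
      (Filter.Eventually.of_forall hξnn) (Filter.Eventually.of_forall ?_)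
    intro e he
    exact ⟨by linarith [he.1], by linarith [he.2]⟩
  have hGnonneg : ∀ u, 0 ≤ G u := fun u =>
    setIntegral_nonneg (hφlev u) fun e _ => hπnn e
  have hGM : G M = 1 := by
    have : {e : ℝ | φ e ≤ M} = Set.univ :=
      Set.eq_univ_of_forall fun e => (hφrange e).2
    rw [hGdef]; simp only [this, Measure.restrict_univ]; exact hπone
  have hGle1 : ∀ u, G u ≤ 1 := by
    intro u
    calc G u ≤ ∫ e : ℝ, π e :=
          setIntegral_le_integral hπint (Filter.Eventually.of_forall hπnn)
      _ = 1 := hπone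
  have hH0 : H 0 = 0 := by
    rw [hHdef]
    simp only [sub_zero, add_zero, Set.Icc_self]
    exact setIntegral_measure_zero _ (measure_singleton c)
  -- right-continuity of G
  have hGrc : ∀ u h : ℝ, (∀ n : ℕ, h ≤ G (u + 1 / (n + 1))) → h ≤ G u := by
    intro u h hh
    have hanti : Antitone fun n : ℕ => {e : ℝ | φ e ≤ u + 1 / (n + 1)} := by
      intro n m hnm e he
      have h1 : (1 : ℝ) / (m + 1) ≤ 1 / (n + 1) := by
        apply one_div_le_one_div_of_le (by positivity)
        have : (n : ℝ) ≤ m := Nat.cast_le.mpr hnm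
        linarith
      simp only [Set.mem_setOf_eq] at he ⊢
      linarith
    have hInter : (⋂ n : ℕ, {e : ℝ | φ e ≤ u + 1 / (n + 1)}) = {e : ℝ | φ e ≤ u} := by
      ext e
      simp only [Set.mem_iInter, Set.mem_setOf_eq]
      constructor
      · intro hn
        by_contra hlt
        push_neg at hlt
        obtain ⟨n, hn'⟩ := exists_nat_one_div_lt (by linarith : (0 : ℝ) < φ e - u)
        have := hn n
        linarith
      · intro h' n
        have : (0 : ℝ) < 1 / (n + 1) := by positivity
        linarith
    have htend := tendsto_setIntegral_of_antitone
      (s := fun n : ℕ => {e : ℝ | φ e ≤ u + 1 / (n + 1)})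
      (f := π) (μ := volume)
      (fun n => hφlev _) hanti ⟨0, hπint.integrableOn⟩
    rw [hInter] at htend
    exact ge_of_tendsto htend (Filter.Eventually.of_forall hh)
  -- continuity of H
  have hHcont : Continuous H := by
    rw [continuous_iff_continuousAt]
    intro t
    have key : Filter.Tendsto
        (fun s : ℝ => ∫ e : ℝ, Set.indicator (Set.Icc (c - s) (c + s)) ξ e)
        (nhds t) (nhds (∫ e : ℝ, Set.indicator (Set.Icc (c - t) (c + t)) ξ e)) := by
      refine tendsto_integral_filter_of_dominated_convergence (fun e => |ξ e|)
        (Filter.Eventually.of_forall fun s =>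
          ((hξmeas.indicator measurableSet_Icc).aestronglyMeasurable))
        (Filter.Eventually.of_forall fun s =>
          Filter.Eventually.of_forall fun e => ?_) hξint.abs ?_
      · rw [Real.norm_eq_abs, Set.indicator_apply]
        split
        · exact le_rfl
        · simp [abs_nonneg]
      · have hc : ∀ᵐ e : ℝ, e ∉ ({c - t, c + t} : Set ℝ) :=
          (Set.to_countable _).ae_notMem _
        filter_upwards [hc] with e he
        simp only [Set.mem_insert_iff, Set.mem_singleton_iff, not_or] at he
        obtain ⟨he1, he2⟩ := he
        rcases lt_trichotomy e (c - t) with h1 | h1 | h1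
        · -- eventually outside
          have hev : ∀ᶠ s in nhds t, e < c - s := by
            have hcont : Filter.Tendsto (fun s : ℝ => c - s) (nhds t) (nhds (c - t)) :=
              (continuous_const.sub continuous_id).tendsto t
            exact hcont.eventually (eventually_gt_nhds h1)
          have : ∀ᶠ s in nhds t, Set.indicator (Set.Icc (c - s) (c + s)) ξ e = 0 := by
            filter_upwards [hev] with s hs
            exact Set.indicator_of_notMem (fun hmem => absurd (Set.mem_Icc.mp hmem).1 (not_le.mpr hs)) _
          rw [Set.indicator_of_notMem (fun hmem => absurd (Set.mem_Icc.mp hmem).1 (not_le.mpr h1)) _]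
          exact Filter.Tendsto.congr' (this.mono fun s hs => hs.symm) tendsto_const_nhds
        · exact absurd h1 he1
        · rcases lt_trichotomy e (c + t) with h2 | h2 | h2
          · -- eventually inside
            have hev1 : ∀ᶠ s in nhds t, c - s < e := by
              have hcont : Filter.Tendsto (fun s : ℝ => c - s) (nhds t) (nhds (c - t)) :=
                (continuous_const.sub continuous_id).tendsto t
              exact hcont.eventually (eventually_lt_nhds h1)
            have hev2 : ∀ᶠ s in nhds t, e < c + s := by
              have hcont : Filter.Tendsto (fun s : ℝ => c + s) (nhds t) (nhds (c + t)) :=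
                (continuous_const.add continuous_id).tendsto t
              exact hcont.eventually (eventually_gt_nhds h2)
            have : ∀ᶠ s in nhds t,
                Set.indicator (Set.Icc (c - s) (c + s)) ξ e = ξ e := by
              filter_upwards [hev1, hev2] with s hs1 hs2
              exact Set.indicator_of_mem (Set.mem_Icc.mpr ⟨hs1.le, hs2.le⟩) _
            rw [Set.indicator_of_mem (Set.mem_Icc.mpr ⟨h1.le, h2.le⟩)]
            exact Filter.Tendsto.congr' (this.mono fun s hs => hs.symm) tendsto_const_nhds
          · exact absurd h2 he2
          · -- eventually outside on the right
            have hev : ∀ᶠ s in nhds t, c + s < e := by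
              have hcont : Filter.Tendsto (fun s : ℝ => c + s) (nhds t) (nhds (c + t)) :=
                (continuous_const.add continuous_id).tendsto t
              exact hcont.eventually (eventually_lt_nhds h2)
            have : ∀ᶠ s in nhds t, Set.indicator (Set.Icc (c - s) (c + s)) ξ e = 0 := by
              filter_upwards [hev] with s hs
              exact Set.indicator_of_notMem (fun hmem => absurd (Set.mem_Icc.mp hmem).2 (not_le.mpr hs)) _
            rw [Set.indicator_of_notMem (fun hmem => absurd (Set.mem_Icc.mp hmem).2 (not_le.mpr h2)) _]
            exact Filter.Tendsto.congr' (this.mono fun s hs => hs.symm) tendsto_const_nhds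
    have heq : ∀ s : ℝ, (∫ e : ℝ, Set.indicator (Set.Icc (c - s) (c + s)) ξ e) = H s :=
      fun s => integral_indicator measurableSet_Icc
    rw [heq t] at key
    exact Filter.Tendsto.congr heq key
  -- H tends to 1
  have hHto1 : Filter.Tendsto (fun n : ℕ => H n) Filter.atTop (nhds 1) := by
    have hmono : Monotone fun n : ℕ => Set.Icc (c - n) (c + n) := by
      intro n m hnm
      have : (n : ℝ) ≤ m := Nat.cast_le.mpr hnm
      exact Set.Icc_subset_Icc (by linarith) (by linarith)
    have hunion : (⋃ n : ℕ, Set.Icc (c - n) (c + n)) = Set.univ := by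
      apply Set.eq_univ_of_forall
      intro e
      obtain ⟨n, hn⟩ := exists_nat_ge |e - c|
      refine Set.mem_iUnion.mpr ⟨n, ?_⟩
      have habs : |e - c| ≤ n := hn
      rw [abs_le] at habs
      exact ⟨by linarith [habs.1], by linarith [habs.2]⟩
    have := tendsto_setIntegral_of_monotone (μ := volume) (f := ξ)
      (fun n : ℕ => measurableSet_Icc) hmono
      (by rw [hunion]; exact hξint.integrableOn)
    rw [hunion] at this
    simpa [hξone] using this
  have hHle1 : ∀ t, H t ≤ 1 := by
    intro t
    calc H t ≤ ∫ e : ℝ, ξ e :=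
          setIntegral_le_integral hξint (Filter.Eventually.of_forall hξnn)
      _ = 1 := hξone
  -- the rearranged prescription
  set S : ℝ → Set ℝ := fun h => {v : ℝ | 0 ≤ v ∧ h ≤ G v} with hSdef
  have hSbdd : ∀ h, BddBelow (S h) := fun h => ⟨0, fun v hv => hv.1⟩
  have hSM : ∀ e : ℝ, M ∈ S (H |e - c|) := by
    intro e
    exact ⟨hM, by rw [hGM]; exact hHle1 _⟩
  set θ : ℝ → ℝ := fun e => sInf (S (H |e - c|)) with hθdef
  have hθrange : ∀ e : ℝ, θ e ∈ Set.Icc (0 : ℝ) M := by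
    intro e
    constructor
    · exact le_csInf ⟨M, hSM e⟩ fun v hv => hv.1
    · exact csInf_le (hSbdd _) (hSM e)
  have hθmono : ∀ a b : ℝ, |a - c| ≤ |b - c| → θ a ≤ θ b := by
    intro a b hab
    apply csInf_le_csInf (hSbdd _) ⟨M, hSM b⟩
    intro v hv
    exact ⟨hv.1, le_trans (hHmono hab) hv.2⟩
  refine ⟨θ, hθrange, ?_, ?_, ?_⟩
  · intro x
    have : |c - x - c| = |c + x - c| := by
      rw [show c - x - c = -x by ring, show c + x - c = x by ring, abs_neg]
    simp only [hθdef, this]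
  · -- quasiconvexity
    intro r
    intro x hx y hy a b ha hb hab
    simp only [Set.mem_sep_iff, Set.mem_univ, true_and] at hx hy ⊢
    · have habs : |a • x + b • y - c| ≤ max |x - c| |y - c| := by
        have hrw : a • x + b • y - c = a * (x - c) + b * (y - c) := by
          simp only [smul_eq_mul]
          have hb1 : b = 1 - a := by linarith
          rw [hb1]; ring
        rw [hrw]
        calc |a * (x - c) + b * (y - c)| ≤ |a * (x - c)| + |b * (y - c)| := abs_add_le _ _
          _ = a * |x - c| + b * |y - c| := by
              rw [abs_mul, abs_mul, abs_of_nonneg ha, abs_of_nonneg hb]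
          _ ≤ a * max |x - c| |y - c| + b * max |x - c| |y - c| := by
              gcongr
              · exact le_max_left _ _
              · exact le_max_right _ _
          _ = max |x - c| |y - c| := by rw [← add_mul, hab, one_mul]
      rcases le_total |x - c| |y - c| with hcmp | hcmp
      · have : |a • x + b • y - c| ≤ |y - c| := le_trans habs (by rw [max_eq_right hcmp])
        exact le_trans (hθmono _ _ this) hy
      · have : |a • x + b • y - c| ≤ |x - c| := le_trans habs (by rw [max_eq_left hcmp])
        exact le_trans (hθmono _ _ this) hx
  · -- the measure-matching property
    intro u
    show (∫ e in {e : ℝ | θ e ≤ u}, ξ e) = G u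
    by_cases hu : 0 ≤ u
    · have hset : {e : ℝ | θ e ≤ u} = {e : ℝ | H |e - c| ≤ G u} := by
        ext e
        simp only [Set.mem_setOf_eq]
        constructor
        · intro he
          refine hGrc u _ fun n => ?_
          have hpos : (0 : ℝ) < 1 / (n + 1) := by positivity
          have hlt : sInf (S (H |e - c|)) < u + 1 / (n + 1) := lt_of_le_of_lt he (by linarith)
          obtain ⟨v, hvS, hv⟩ := (csInf_lt_iff (hSbdd _) ⟨M, hSM e⟩).mp hlt
          exact le_trans hvS.2 (hGmono hv.le)
        · intro he
          exact csInf_le (hSbdd _) ⟨hu, he⟩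
      rw [hset]
      have hg0 : 0 ≤ G u := hGnonneg u
      by_cases hbd : BddAbove {t : ℝ | H t ≤ G u}
      · have hT0 : (0 : ℝ) ∈ {t : ℝ | H t ≤ G u} := by
          simp only [Set.mem_setOf_eq, hH0]; exact hg0
        have hTne : ({t : ℝ | H t ≤ G u}).Nonempty := ⟨0, hT0⟩
        set t' := sSup {t : ℝ | H t ≤ G u} with ht'def
        have hTclosed : IsClosed {t : ℝ | H t ≤ G u} :=
          isClosed_le hHcont continuous_const
        have htT : t' ∈ {t : ℝ | H t ≤ G u} := hTclosed.csSup_mem hTne hbd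
        have hge : G u ≤ H t' := by
          have hseq : Filter.Tendsto (fun n : ℕ => H (t' + 1 / (n + 1)))
              Filter.atTop (nhds (H t')) := by
            apply (hHcont.tendsto t').comp
            have : Filter.Tendsto (fun n : ℕ => (1 : ℝ) / (n + 1)) Filter.atTop (nhds 0) :=
              tendsto_one_div_add_atTop_nhds_zero_nat
            simpa using (tendsto_const_nhds.add this)
          refine ge_of_tendsto hseq (Filter.Eventually.of_forall fun n => ?_)
          have hpos : (0 : ℝ) < 1 / (n + 1) := by positivity
          have hnot : t' + 1 / (n + 1) ∉ {t : ℝ | H t ≤ G u} := by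
            intro hmem
            have := le_csSup hbd hmem
            linarith
          simp only [Set.mem_setOf_eq, not_le] at hnot
          exact hnot.le
        have hHt' : H t' = G u := le_antisymm htT hge
        have hseteq : {e : ℝ | H |e - c| ≤ G u} = Set.Icc (c - t') (c + t') := by
          ext e
          simp only [Set.mem_setOf_eq, Set.mem_Icc]
          constructor
          · intro h
            have : |e - c| ≤ t' := le_csSup hbd h
            rw [abs_le] at this
            exact ⟨by linarith [this.1], by linarith [this.2]⟩
          · intro h
            have habs : |e - c| ≤ t' := abs_le.mpr ⟨by linarith [h.1], by linarith [h.2]⟩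
            exact le_trans (hHmono habs) (le_of_eq hHt')
        rw [hseteq]
        exact hHt'
      · have hall : ∀ t, H t ≤ G u := by
          intro t
          obtain ⟨t'', ht''T, htt''⟩ := not_bddAbove_iff.mp hbd t
          exact le_trans (hHmono htt''.le) ht''T
        have hset2 : {e : ℝ | H |e - c| ≤ G u} = Set.univ :=
          Set.eq_univ_of_forall fun e => hall _
        have hg1 : G u = 1 := by
          refine le_antisymm (hGle1 u) ?_
          exact le_of_tendsto hHto1 (Filter.Eventually.of_forall fun n => hall n)
        rw [hset2]
        simp only [Measure.restrict_univ]
        rw [hg1]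
        exact hξone
    · push_neg at hu
      have h1 : {e : ℝ | θ e ≤ u} = ∅ := by
        apply Set.eq_empty_of_forall_notMem
        intro e he
        simp only [Set.mem_setOf_eq] at he
        linarith [(hθrange e).1]
      have h2 : {e : ℝ | φ e ≤ u} = ∅ := by
        apply Set.eq_empty_of_forall_notMem
        intro e he
        simp only [Set.mem_setOf_eq] at he
        linarith [(hφrange e).1]
      have hG0 : G u = 0 := by
        show (∫ e in {e : ℝ | φ e ≤ u}, π e) = 0
        rw [h2]
        simp
      rw [h1, hG0]
      simp
end

section
/- Let f : ℝ → ℝ be even and quasiconvex, and suppose the range of f is a finite set {u₀ < u₁ < ⋯ < u_m}. For i ∈ {0,…,m} define k⁽ⁱ⁾ = inf { e ∈ [0,∞) : f(e) = u_i } and set k⁽ᵐ⁺¹⁾ = ∞. Then k⁽⁰⁾ ≤ k⁽¹⁾ ≤ ⋯ ≤ k⁽ᵐ⁾, and for every i ∈ {0,…,m} and every e ∈ ℝ with k⁽ⁱ⁾ < |e| < k⁽ⁱ⁺¹⁾, one has f(e) = u_i. -/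
/-- An even quasiconvex function taking finitely many values `u 0 < ⋯ < u m` is
threshold based: with `k i = inf {e ≥ 0 : f e = u i}` (and `k (m+1) = ∞`
treated by making the upper constraint vacuous at `i = m`), the thresholds are
nondecreasing and `f e = u i` whenever `k i < |e| < k (i+1)`. -/
theorem sqc_finite_range_threshold (f : ℝ → ℝ)
    (heven : ∀ x : ℝ, f (-x) = f x)
    (hqc : QuasiconvexOn ℝ Set.univ f)
    (m : ℕ) (u : ℕ → ℝ)
    (hu : ∀ i j : ℕ, i < j → j ≤ m → u i < u j)
    (hrange : Set.range f = u '' {i : ℕ | i ≤ m})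
    (k : ℕ → ℝ)
    (hk : ∀ i ≤ m, k i = sInf {e : ℝ | 0 ≤ e ∧ f e = u i}) :
    (∀ i j : ℕ, i ≤ j → j ≤ m → k i ≤ k j) ∧
      (∀ i ≤ m, ∀ e : ℝ, k i < |e| → (i < m → |e| < k (i + 1)) → f e = u i) := by
  have habs : ∀ x : ℝ, f |x| = f x := by
    intro x
    rcases abs_cases x with ⟨h, _⟩ | ⟨h, _⟩
    · rw [h]
    · rw [h, heven]
  -- monotonicity in |·|
  have hmono : ∀ x y : ℝ, |y| ≤ |x| → f y ≤ f x := by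
    intro x y h
    have hconv := hqc (f x)
    have h1 : (-|x|) ∈ {z | z ∈ Set.univ ∧ f z ≤ f x} :=
      ⟨trivial, by rw [heven, habs]⟩
    have h2 : |x| ∈ {z | z ∈ Set.univ ∧ f z ≤ f x} := ⟨trivial, (habs x).le⟩
    have hy : y ∈ segment ℝ (-|x|) |x| := by
      rw [segment_eq_Icc (neg_le_self (abs_nonneg x))]
      exact abs_le.mp h
    exact (hconv.segment_subset h1 h2 hy).2
  -- the level sets
  set S : ℕ → Set ℝ := fun i => {e : ℝ | 0 ≤ e ∧ f e = u i} with hS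
  have hbdd : ∀ i, BddBelow (S i) := fun i => ⟨0, fun e he => he.1⟩
  have hne : ∀ i ≤ m, (S i).Nonempty := by
    intro i hi
    have : u i ∈ Set.range f := by
      rw [hrange]; exact ⟨i, hi, rfl⟩
    obtain ⟨x, hx⟩ := this
    exact ⟨|x|, abs_nonneg x, by rw [habs]; exact hx⟩
  -- ordering of level sets
  have hord : ∀ i j : ℕ, i < j → j ≤ m → ∀ e ∈ S i, ∀ e' ∈ S j, e < e' := by
    intro i j hij hjm e he e' he'
    by_contra hle
    push_neg at hle
    have : f e' ≤ f e := by
      apply hmono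
      rw [abs_of_nonneg he.1, abs_of_nonneg he'.1]
      exact hle
    rw [he.2, he'.2] at this
    exact absurd this (not_le_of_gt (hu i j hij hjm))
  constructor
  · intro i j hij hjm
    rcases eq_or_lt_of_le hij with rfl | hij'
    · exact le_rfl
    · obtain ⟨e, he⟩ := hne i (le_trans hij hjm)
      rw [hk i (le_trans hij hjm), hk j hjm]
      calc sInf (S i) ≤ e := csInf_le (hbdd i) he
        _ ≤ sInf (S j) := le_csInf (hne j hjm) fun e' he' => (hord i j hij' hjm e he e' he').le
  · intro i hi e h1 h2
    -- f e = u j for some j ≤ m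
    have : f |e| ∈ Set.range f := ⟨|e|, rfl⟩
    rw [hrange] at this
    obtain ⟨j, hjm, hj⟩ := this
    have hje : |e| ∈ S j := ⟨abs_nonneg e, hj.symm⟩
    -- i ≤ j
    have hij : i ≤ j := by
      rw [hk i hi] at h1
      obtain ⟨e'', he'', hlt⟩ := exists_lt_of_csInf_lt (hne i hi) h1
      by_contra hji
      push_neg at hji
      exact absurd (hord j i hji hi |e| hje e'' he'') (not_lt_of_ge hlt.le)
    rcases eq_or_lt_of_le hij with rfl | hij'
    · rw [← habs]; exact hj.symm
    · exfalso
      have him : i < m := lt_of_lt_of_le hij' hjm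
      have hup := h2 him
      rw [hk (i + 1) him] at hup
      have hk1 : sInf (S (i + 1)) ≤ |e| := by
        rcases eq_or_lt_of_le (Nat.succ_le_of_lt hij') with rfl | hlt
        · exact csInf_le (hbdd (i + 1)) hje
        · obtain ⟨e', he'⟩ := hne (i + 1) him
          exact le_trans (csInf_le (hbdd (i + 1)) he')
            (hord (i + 1) j hlt hjm e' he' |e| hje).le
      exact absurd hup (not_lt_of_ge hk1)
end

section
/- Let μ : ℝ → [0,∞) be Lebesgue-integrable, even, and nonincreasing on [0,∞). Fix y ≥ 0 and a ∈ ℝ, and define G(e) = ∫_{(−∞, y − a·e]} μ(w) dw + ∫_{(−∞, y + a·e]} μ(w) dw. Then G is nonincreasing on [0,∞): for all 0 ≤ e₁ ≤ e₂, G(e₂) ≤ G(e₁). -/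
open MeasureTheory

lemma tail_sum_key (μ : ℝ → ℝ)
    (hint : Integrable μ) (hnn : ∀ x : ℝ, 0 ≤ μ x)
    (heven : ∀ x : ℝ, μ (-x) = μ x)
    (hmono : AntitoneOn μ (Set.Ici (0 : ℝ)))
    (y : ℝ) (hy : 0 ≤ y) {t₁ t₂ : ℝ} (ht₁ : 0 ≤ t₁) (h : t₁ ≤ t₂) :
    (∫ w in Set.Iic (y - t₂), μ w) + ∫ w in Set.Iic (y + t₂), μ w ≤
      (∫ w in Set.Iic (y - t₁), μ w) + ∫ w in Set.Iic (y + t₁), μ w := by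
  have hI : ∀ s : Set ℝ, IntegrableOn μ s := fun s => hint.integrableOn
  have h1 : (∫ w in Set.Iic (y + t₂), μ w) - ∫ w in Set.Iic (y + t₁), μ w
      = ∫ w in (y + t₁)..(y + t₂), μ w :=
    intervalIntegral.integral_Iic_sub_Iic (hI _) (hI _)
  have h2 : (∫ w in Set.Iic (y - t₁), μ w) - ∫ w in Set.Iic (y - t₂), μ w
      = ∫ w in (y - t₂)..(y - t₁), μ w :=
    intervalIntegral.integral_Iic_sub_Iic (hI _) (hI _)
  have hii : IntervalIntegrable μ volume (y + t₁) (y + t₂) :=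
    (hI _).intervalIntegrable
  have hii2 : IntervalIntegrable (fun w => μ (2 * y - w)) volume (y + t₁) (y + t₂) := by
    have := (hI (Set.uIcc (2 * y - (y + t₁)) (2 * y - (y + t₂)))).intervalIntegrable.comp_sub_left
      (2 * y)
    simpa using this
  have key : (∫ w in (y + t₁)..(y + t₂), μ w) ≤ ∫ w in (y - t₂)..(y - t₁), μ w := by
    have hle : y + t₁ ≤ y + t₂ := by linarith
    have hmain : (∫ w in (y + t₁)..(y + t₂), μ w)
        ≤ ∫ w in (y + t₁)..(y + t₂), μ (2 * y - w) := by
      apply intervalIntegral.integral_mono_on hle hii hii2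
      intro w hw
      have hw1 : y + t₁ ≤ w := hw.1
      have hw0 : 0 ≤ w := by linarith
      rcases le_or_gt 0 (2 * y - w) with hc | hc
      · exact hmono (Set.mem_Ici.mpr hc) (Set.mem_Ici.mpr hw0) (by linarith)
      · have : μ (2 * y - w) = μ (w - 2 * y) := by
          rw [← heven (w - 2 * y)]; ring_nf
        rw [this]
        exact hmono (Set.mem_Ici.mpr (by linarith)) (Set.mem_Ici.mpr hw0) (by linarith)
    have heq : (∫ w in (y + t₁)..(y + t₂), μ (2 * y - w))
        = ∫ w in (y - t₂)..(y - t₁), μ w := by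
      have := intervalIntegral.integral_comp_sub_left (a := y + t₁) (b := y + t₂) μ (2 * y)
      convert this using 2 <;> ring
    linarith [hmain, heq ▸ hmain]
  linarith [h1, h2, key]

/-- For an integrable, even noise density `μ` that is nonincreasing on `[0,∞)`,
and any `y ≥ 0`, `a ∈ ℝ`, the function
`e ↦ ∫_{(-∞, y - a e]} μ + ∫_{(-∞, y + a e]} μ` is nonincreasing on `[0,∞)`. -/
theorem tail_sum_antitone (μ : ℝ → ℝ)
    (hint : Integrable μ) (hnn : ∀ x : ℝ, 0 ≤ μ x)
    (heven : ∀ x : ℝ, μ (-x) = μ x)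
    (hmono : AntitoneOn μ (Set.Ici (0 : ℝ)))
    (y a : ℝ) (hy : 0 ≤ y) :
    AntitoneOn
      (fun e : ℝ =>
        (∫ w in Set.Iic (y - a * e), μ w) + ∫ w in Set.Iic (y + a * e), μ w)
      (Set.Ici (0 : ℝ)) := by
  intro e₁ he₁ e₂ he₂ h
  simp only [Set.mem_Ici] at he₁ he₂
  dsimp only
  rcases le_or_gt 0 a with ha | ha
  · exact tail_sum_key μ hint hnn heven hmono y hy
      (mul_nonneg ha he₁) (mul_le_mul_of_nonneg_left h ha)
  · have key := tail_sum_key μ hint hnn heven hmono y hy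
      (t₁ := (-a) * e₁) (t₂ := (-a) * e₂)
      (mul_nonneg (by linarith) he₁) (mul_le_mul_of_nonneg_left h (by linarith))
    simp only [neg_mul] at key
    simp only [sub_neg_eq_add, ← sub_eq_add_neg] at key
    linarith [key]
end

section
/- Consider the finite-horizon dynamic program defined in the context. Then for every t ∈ {0, 1, …, T+1} and every channel state s ∈ S, the value function e ↦ J_t(e, s) is even and quasiconvex on ℝ. -/
open MeasureTheory

namespace VFQCAux

lemma abs_apply {f : ℝ → ℝ} (he : ∀ x, f (-x) = f x) (x : ℝ) : f |x| = f x := by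
  rcases le_or_gt 0 x with h | h
  · rw [abs_of_nonneg h]
  · rw [abs_of_neg h, he]

lemma le_of_abs_le_abs {f : ℝ → ℝ} (he : ∀ x, f (-x) = f x)
    (hm : MonotoneOn f (Set.Ici 0)) {x y : ℝ} (h : |x| ≤ |y|) : f x ≤ f y := by
  rw [← abs_apply he x, ← abs_apply he y]
  exact hm (Set.mem_Ici.2 (abs_nonneg x)) (Set.mem_Ici.2 (abs_nonneg y)) h

lemma ge_of_abs_le_abs {f : ℝ → ℝ} (he : ∀ x, f (-x) = f x)
    (hm : AntitoneOn f (Set.Ici 0)) {x y : ℝ} (h : |x| ≤ |y|) : f y ≤ f x := by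
  rw [← abs_apply he x, ← abs_apply he y]
  exact hm (Set.mem_Ici.2 (abs_nonneg x)) (Set.mem_Ici.2 (abs_nonneg y)) h

lemma abs_le_abs_of_sq_le_sq' {x y : ℝ} (h : x ^ 2 ≤ y ^ 2) : |x| ≤ |y| := by
  nlinarith [abs_nonneg x, abs_nonneg y, sq_abs x, sq_abs y]

lemma measurable_of_even_mono {f : ℝ → ℝ} (he : ∀ x, f (-x) = f x)
    (hm : MonotoneOn f (Set.Ici 0)) : Measurable f := by
  have hmono : Monotone fun c => f (max c 0) := fun x y hxy =>
    hm (Set.mem_Ici.2 (le_max_right _ _)) (Set.mem_Ici.2 (le_max_right _ _))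
      (max_le_max hxy le_rfl)
  have hfeq : f = fun x => f (max |x| 0) := by
    funext x
    rw [max_eq_left (abs_nonneg x), abs_apply he]
  rw [hfeq]
  exact hmono.measurable.comp measurable_abs

lemma quasiconvex_of_even_mono {f : ℝ → ℝ} (he : ∀ x, f (-x) = f x)
    (hm : MonotoneOn f (Set.Ici 0)) : QuasiconvexOn ℝ Set.univ f := by
  intro c x hx y hy α β hα hβ hαβ
  refine ⟨Set.mem_univ _, ?_⟩
  set M := max |x| |y| with hM
  have hM0 : 0 ≤ M := le_trans (abs_nonneg x) (le_max_left _ _)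
  have habs : |α • x + β • y| ≤ |M| := by
    rw [abs_of_nonneg hM0]
    calc |α • x + β • y| ≤ |α • x| + |β • y| := abs_add_le _ _
      _ = α * |x| + β * |y| := by
          simp [smul_eq_mul, abs_mul, abs_of_nonneg hα, abs_of_nonneg hβ]
      _ ≤ α * M + β * M := by
          gcongr
          exacts [le_max_left _ _, le_max_right _ _]
      _ = M := by rw [← add_mul, hαβ, one_mul]
  have h2 : f (α • x + β • y) ≤ f M := le_of_abs_le_abs he hm habs
  have h3 : f M ≤ c := by
    rcases max_choice |x| |y| with hmx | hmx <;> rw [hM, hmx, abs_apply he]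
    · exact hx.2
    · exact hy.2
  exact le_trans h2 h3

lemma mono_of_even_qc {f : ℝ → ℝ} (he : ∀ x, f (-x) = f x)
    (hq : QuasiconvexOn ℝ Set.univ f) : MonotoneOn f (Set.Ici 0) := by
  intro x hx y hy hxy
  have hx0 : (0 : ℝ) ≤ x := hx
  have hy0 : (0 : ℝ) ≤ y := hy
  rcases eq_or_lt_of_le hy0 with h0 | h0
  · have hx' : x = 0 := le_antisymm (h0 ▸ hxy) hx0
    rw [hx', ← h0]
  · have hconv := hq (f y)
    have h1 : (-y) ∈ {z ∈ Set.univ | f z ≤ f y} := ⟨trivial, (he y).le⟩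
    have h2 : y ∈ {z ∈ Set.univ | f z ≤ f y} := ⟨trivial, le_rfl⟩
    have hy2 : (0 : ℝ) < 2 * y := by linarith
    have hα : 0 ≤ (y - x) / (2 * y) := div_nonneg (by linarith) hy2.le
    have hβ : 0 ≤ (y + x) / (2 * y) := div_nonneg (by linarith) hy2.le
    have hαβ : (y - x) / (2 * y) + (y + x) / (2 * y) = 1 := by
      field_simp
      ring
    have hmem := hconv h1 h2 hα hβ hαβ
    have hcomb : ((y - x) / (2 * y)) • (-y) + ((y + x) / (2 * y)) • y = x := by
      rw [smul_eq_mul, smul_eq_mul]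
      field_simp
      ring
    rw [hcomb] at hmem
    exact hmem.2

lemma integrable_mul_of_bounded {g μ : ℝ → ℝ} (hg : Measurable g) (hg0 : ∀ x, 0 ≤ g x)
    {C : ℝ} (hgC : ∀ x, g x ≤ C) (hμmeas : Measurable μ) (hμnn : ∀ x, 0 ≤ μ x)
    (hμ : Integrable μ) : Integrable (fun w => g w * μ w) := by
  refine Integrable.mono' (hμ.const_mul C) ((hg.mul hμmeas).aestronglyMeasurable) ?_
  filter_upwards with w
  rw [Real.norm_eq_abs, abs_of_nonneg (mul_nonneg (hg0 w) (hμnn w))]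
  exact mul_le_mul_of_nonneg_right (hgC w) (hμnn w)

/-- Anderson-type lemma: convolving an even function that is monotone on `[0,∞)`
with an even density that is nonincreasing on `[0,∞)` preserves evenness and
monotonicity on `[0,∞)`. -/
lemma anderson {g μ : ℝ → ℝ} (hgmeas : Measurable g) (hg0 : ∀ x, 0 ≤ g x)
    {C : ℝ} (hgC : ∀ x, g x ≤ C)
    (hge : ∀ x, g (-x) = g x) (hgm : MonotoneOn g (Set.Ici 0))
    (hμmeas : Measurable μ) (hμnn : ∀ x, 0 ≤ μ x) (hμint : Integrable μ)
    (hμe : ∀ x, μ (-x) = μ x) (hμm : AntitoneOn μ (Set.Ici 0)) :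
    (∀ e : ℝ, (∫ w, g (-e + w) * μ w) = ∫ w, g (e + w) * μ w) ∧
      MonotoneOn (fun e => ∫ w, g (e + w) * μ w) (Set.Ici 0) := by
  have geven : ∀ e : ℝ, (∫ w, g (-e + w) * μ w) = ∫ w, g (e + w) * μ w := by
    intro e
    have h := integral_neg_eq_self (fun w => g (-e + w) * μ w) volume
    calc (∫ w, g (-e + w) * μ w) = ∫ w, g (-e + -w) * μ (-w) := h.symm
      _ = ∫ w, g (e + w) * μ w := by
          congr 1; funext w
          rw [hμe, show (-e + -w) = -(e + w) by ring, hge]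
  refine ⟨geven, ?_⟩
  have shift : ∀ e : ℝ, (∫ w, g (e + w) * μ w) = ∫ w, g w * μ (w - e) := by
    intro e
    have h : (∫ w, (fun v => g (e + v) * μ v) (w - e)) = ∫ w, g (e + w) * μ w :=
      integral_sub_right_eq_self (fun v => g (e + v) * μ v) e
    rw [← h]
    congr 1; funext w
    show g (e + (w - e)) * μ (w - e) = g w * μ (w - e)
    rw [show e + (w - e) = w by ring]
  intro e1 he1 e2 he2 h12
  simp only
  rw [shift e1, shift e2]
  have he1' : (0 : ℝ) ≤ e1 := he1
  set S := e1 + e2 with hS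
  have hS0 : (0 : ℝ) ≤ S := by rw [hS]; linarith
  have gS : Measurable fun w => g (S - w) := hgmeas.comp (measurable_const.sub measurable_id)
  have μe : ∀ e : ℝ, Integrable (fun w => μ (w - e)) := fun e => hμint.comp_sub_right e
  have μem : ∀ e : ℝ, Measurable (fun w => μ (w - e)) := fun e =>
    hμmeas.comp (measurable_id.sub measurable_const)
  have I1 : Integrable (fun w => g w * μ (w - e2)) :=
    integrable_mul_of_bounded hgmeas hg0 hgC (μem e2) (fun w => hμnn _) (μe e2)
  have I2 : Integrable (fun w => g w * μ (w - e1)) :=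
    integrable_mul_of_bounded hgmeas hg0 hgC (μem e1) (fun w => hμnn _) (μe e1)
  have I3 : Integrable (fun w => g (S - w) * μ (w - e2)) :=
    integrable_mul_of_bounded gS (fun w => hg0 _) (fun w => hgC _) (μem e2)
      (fun w => hμnn _) (μe e2)
  have I4 : Integrable (fun w => g (S - w) * μ (w - e1)) :=
    integrable_mul_of_bounded gS (fun w => hg0 _) (fun w => hgC _) (μem e1)
      (fun w => hμnn _) (μe e1)
  have R3 : (∫ w, g (S - w) * μ (w - e2)) = ∫ w, g w * μ (w - e1) := by
    have h := integral_sub_left_eq_self (fun w => g (S - w) * μ (w - e2)) volume S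
    calc (∫ w, g (S - w) * μ (w - e2))
        = ∫ w, g (S - (S - w)) * μ ((S - w) - e2) := h.symm
      _ = ∫ w, g w * μ (w - e1) := by
          congr 1; funext w
          rw [show S - (S - w) = w by ring, show S - w - e2 = -(w - e1) by rw [hS]; ring, hμe]
  have R4 : (∫ w, g (S - w) * μ (w - e1)) = ∫ w, g w * μ (w - e2) := by
    have h := integral_sub_left_eq_self (fun w => g (S - w) * μ (w - e1)) volume S
    calc (∫ w, g (S - w) * μ (w - e1))
        = ∫ w, g (S - (S - w)) * μ ((S - w) - e1) := h.symm
      _ = ∫ w, g w * μ (w - e2) := by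
          congr 1; funext w
          rw [show S - (S - w) = w by ring, show S - w - e1 = -(w - e2) by rw [hS]; ring, hμe]
  have hpt : ∀ w : ℝ, 0 ≤ (g w - g (S - w)) * (μ (w - e2) - μ (w - e1)) := by
    intro w
    rcases le_total S (2 * w) with hc | hc
    · have hw : (0:ℝ) ≤ 2 * w - e1 - e2 := by rw [hS] at hc; linarith
      have hg' : g (S - w) ≤ g w := le_of_abs_le_abs hge hgm
        (abs_le_abs_of_sq_le_sq' (by nlinarith [mul_nonneg hS0 (by linarith : (0:ℝ) ≤ 2 * w - S)]))
      have hμ' : μ (w - e1) ≤ μ (w - e2) := ge_of_abs_le_abs hμe hμm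
        (abs_le_abs_of_sq_le_sq'
          (by nlinarith [mul_nonneg (by linarith : (0:ℝ) ≤ e2 - e1) hw]))
      exact mul_nonneg (by linarith) (by linarith)
    · have hw : (0:ℝ) ≤ e1 + e2 - 2 * w := by rw [hS] at hc; linarith
      have hg' : g w ≤ g (S - w) := le_of_abs_le_abs hge hgm
        (abs_le_abs_of_sq_le_sq' (by nlinarith [mul_nonneg hS0 (by linarith : (0:ℝ) ≤ S - 2 * w)]))
      have hμ' : μ (w - e2) ≤ μ (w - e1) := ge_of_abs_le_abs hμe hμm
        (abs_le_abs_of_sq_le_sq'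
          (by nlinarith [mul_nonneg (by linarith : (0:ℝ) ≤ e2 - e1) hw]))
      nlinarith [mul_nonneg (by linarith : (0:ℝ) ≤ g (S - w) - g w)
        (by linarith : (0:ℝ) ≤ μ (w - e1) - μ (w - e2))]
  have hI : 0 ≤ ∫ w, (g w - g (S - w)) * (μ (w - e2) - μ (w - e1)) :=
    integral_nonneg hpt
  have E1 : (∫ w, (g w * μ (w - e2) - g w * μ (w - e1)))
      = (∫ w, g w * μ (w - e2)) - ∫ w, g w * μ (w - e1) := integral_sub I1 I2
  have E2 : (∫ w, ((g w * μ (w - e2) - g w * μ (w - e1)) - g (S - w) * μ (w - e2)))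
      = (∫ w, (g w * μ (w - e2) - g w * μ (w - e1))) - ∫ w, g (S - w) * μ (w - e2) :=
    integral_sub (I1.sub I2) I3
  have E3 : (∫ w, (((g w * μ (w - e2) - g w * μ (w - e1)) - g (S - w) * μ (w - e2))
        + g (S - w) * μ (w - e1)))
      = (∫ w, ((g w * μ (w - e2) - g w * μ (w - e1)) - g (S - w) * μ (w - e2)))
        + ∫ w, g (S - w) * μ (w - e1) := integral_add ((I1.sub I2).sub I3) I4
  have hexp : (∫ w, (g w - g (S - w)) * (μ (w - e2) - μ (w - e1)))
      = (((∫ w, g w * μ (w - e2)) - ∫ w, g w * μ (w - e1))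
        - ∫ w, g (S - w) * μ (w - e2)) + ∫ w, g (S - w) * μ (w - e1) := by
    calc (∫ w, (g w - g (S - w)) * (μ (w - e2) - μ (w - e1)))
        = ∫ w, (((g w * μ (w - e2) - g w * μ (w - e1)) - g (S - w) * μ (w - e2))
            + g (S - w) * μ (w - e1)) := by
          congr 1; funext w; ring
      _ = _ := by rw [E3, E2, E1]
  rw [hexp, R3, R4] at hI
  linarith

end VFQCAux

/-- Part 1 of Theorem 4 of the paper: in the finite-horizon dynamic program for
a first-order autoregressive source over a Markovian packet-drop channel, for
every time `t ≤ T+1` and channel state `s`, the value function `e ↦ J t e s`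
is even and quasiconvex. -/
theorem value_function_even_quasiconvex
    (T n : ℕ) (a : ℝ)
    (U : Finset ℝ) (hU0 : (0 : ℝ) ∈ U) (hUnn : ∀ u ∈ U, (0 : ℝ) ≤ u)
    (μ : ℝ → ℝ) (hμmeas : Measurable μ) (hμnn : ∀ x : ℝ, 0 ≤ μ x)
    (hμone : ∫ x : ℝ, μ x = 1)
    (hμeven : ∀ x : ℝ, μ (-x) = μ x)
    (hμmono : AntitoneOn μ (Set.Ici (0 : ℝ)))
    (d : ℝ → ℝ) (hdmeas : Measurable d) (hdnn : ∀ x : ℝ, 0 ≤ d x)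
    (hdbd : ∃ C : ℝ, ∀ x : ℝ, d x ≤ C)
    (hdeven : ∀ x : ℝ, d (-x) = d x)
    (hdqc : QuasiconvexOn ℝ Set.univ d) (hd0 : d 0 = 0)
    (lam : ℝ → ℝ) (hlam_mono : MonotoneOn lam U) (hlam0 : lam 0 = 0)
    (hlamnn : ∀ u ∈ U, 0 ≤ lam u)
    (p : Fin n → ℝ → ℝ)
    (hp0 : ∀ s : Fin n, p s 0 = 1)
    (hp01 : ∀ s : Fin n, ∀ u ∈ U, p s u ∈ Set.Icc (0 : ℝ) 1)
    (hpu : ∀ s : Fin n, ∀ u ∈ U, ∀ v ∈ U, u ≤ v → p s v ≤ p s u)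
    (Q : Fin n → Fin n → ℝ)
    (hQnn : ∀ i j : Fin n, 0 ≤ Q i j)
    (hQrow : ∀ i : Fin n, ∑ j : Fin n, Q i j = 1)
    (J : ℕ → ℝ → Fin n → ℝ)
    (Hbar : ℕ → ℝ → Fin n → ℝ → ℝ)
    (hHbar : ∀ (t : ℕ) (e : ℝ) (s : Fin n) (u : ℝ),
      Hbar t e s u =
        lam u + (∑ s' : Fin n, Q s s' * p s' u) * d e +
          ∑ s' : Fin n, Q s s' *
            ((1 - p s' u) * (∫ w : ℝ, J (t + 1) w s' * μ w) +
              p s' u * (∫ w : ℝ, J (t + 1) (a * e + w) s' * μ w)))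
    (hJT : ∀ (e : ℝ) (s : Fin n), J (T + 1) e s = 0)
    (hJrec : ∀ t ≤ T, ∀ (e : ℝ) (s : Fin n),
      J t e s = U.inf' ⟨0, hU0⟩ (Hbar t e s)) :
    ∀ t ≤ T + 1, ∀ s : Fin n,
      (∀ x : ℝ, J t (-x) s = J t x s) ∧
        QuasiconvexOn ℝ Set.univ (fun e : ℝ => J t e s) := by
  classical
  obtain ⟨Cd, hCd⟩ := hdbd
  have hμint : Integrable μ := by
    by_contra h
    rw [integral_undef h] at hμone
    norm_num at hμone
  have hdmono : MonotoneOn d (Set.Ici 0) := VFQCAux.mono_of_even_qc hdeven hdqc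
  -- the inductive invariant
  have base : ∀ s : Fin n,
      (∀ x : ℝ, J (T + 1) (-x) s = J (T + 1) x s) ∧
        MonotoneOn (fun e => J (T + 1) e s) (Set.Ici 0) ∧
        (∀ e : ℝ, 0 ≤ J (T + 1) e s) ∧ ∃ C : ℝ, ∀ e : ℝ, J (T + 1) e s ≤ C := by
    intro s
    refine ⟨fun x => by rw [hJT, hJT], ?_, fun e => by rw [hJT], ⟨0, fun e => by rw [hJT]⟩⟩
    intro x _ y _ _
    simp only [hJT]
    exact le_rfl
  have step : ∀ t, t ≤ T →
      (∀ s : Fin n,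
        (∀ x : ℝ, J (t + 1) (-x) s = J (t + 1) x s) ∧
          MonotoneOn (fun e => J (t + 1) e s) (Set.Ici 0) ∧
          (∀ e : ℝ, 0 ≤ J (t + 1) e s) ∧ ∃ C : ℝ, ∀ e : ℝ, J (t + 1) e s ≤ C) →
      (∀ s : Fin n,
        (∀ x : ℝ, J t (-x) s = J t x s) ∧
          MonotoneOn (fun e => J t e s) (Set.Ici 0) ∧
          (∀ e : ℝ, 0 ≤ J t e s) ∧ ∃ C : ℝ, ∀ e : ℝ, J t e s ≤ C) := by
    intro t htT hG
    choose Cf hCf using fun s' => (hG s').2.2.2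
    have heven' : ∀ s' x, J (t + 1) (-x) s' = J (t + 1) x s' := fun s' => (hG s').1
    have hmono' : ∀ s', MonotoneOn (fun e => J (t + 1) e s') (Set.Ici 0) := fun s' => (hG s').2.1
    have hnn' : ∀ s' e, 0 ≤ J (t + 1) e s' := fun s' => (hG s').2.2.1
    have hmeas' : ∀ s', Measurable fun e => J (t + 1) e s' := fun s' =>
      VFQCAux.measurable_of_even_mono (heven' s') (hmono' s')
    have hand : ∀ s' : Fin n,
        (∀ e : ℝ, (∫ w, J (t + 1) (-e + w) s' * μ w) = ∫ w, J (t + 1) (e + w) s' * μ w) ∧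
          MonotoneOn (fun e => ∫ w, J (t + 1) (e + w) s' * μ w) (Set.Ici 0) := fun s' =>
      VFQCAux.anderson (hmeas' s') (hnn' s') (hCf s') (heven' s') (hmono' s')
        hμmeas hμnn hμint hμeven hμmono
    have heI : ∀ (s' : Fin n) (e : ℝ),
        (∫ w, J (t + 1) (a * -e + w) s' * μ w) = ∫ w, J (t + 1) (a * e + w) s' * μ w := by
      intro s' e
      rw [show a * -e = -(a * e) by ring]
      exact (hand s').1 (a * e)
    have hmI : ∀ s' : Fin n,
        MonotoneOn (fun e => ∫ w, J (t + 1) (a * e + w) s' * μ w) (Set.Ici 0) := by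
      intro s' x hx y hy hxy
      refine VFQCAux.le_of_abs_le_abs (hand s').1 (hand s').2 ?_
      rw [abs_mul, abs_mul]
      refine mul_le_mul_of_nonneg_left ?_ (abs_nonneg a)
      rw [abs_of_nonneg hx, abs_of_nonneg hy]
      exact hxy
    have hnnI : ∀ (s' : Fin n) (c : ℝ), 0 ≤ ∫ w, J (t + 1) (c + w) s' * μ w := fun s' c =>
      integral_nonneg fun w => mul_nonneg (hnn' s' _) (hμnn w)
    have hleI : ∀ (s' : Fin n) (c : ℝ), (∫ w, J (t + 1) (c + w) s' * μ w) ≤ Cf s' := by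
      intro s' c
      have hint : Integrable (fun w => J (t + 1) (c + w) s' * μ w) :=
        VFQCAux.integrable_mul_of_bounded ((hmeas' s').comp (measurable_const_add c))
          (fun w => hnn' s' _) (fun w => hCf s' _) hμmeas hμnn hμint
      calc (∫ w, J (t + 1) (c + w) s' * μ w) ≤ ∫ w, Cf s' * μ w :=
            integral_mono hint (hμint.const_mul _)
              (fun w => mul_le_mul_of_nonneg_right (hCf s' _) (hμnn w))
        _ = Cf s' := by rw [integral_const_mul, hμone, mul_one]
    have hKnn : ∀ s' : Fin n, 0 ≤ ∫ w, J (t + 1) w s' * μ w := fun s' =>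
      integral_nonneg fun w => mul_nonneg (hnn' s' _) (hμnn w)
    -- per-control properties of Hbar
    have even_H : ∀ (s : Fin n) (u e : ℝ), Hbar t (-e) s u = Hbar t e s u := by
      intro s u e
      rw [hHbar, hHbar, hdeven]
      congr 1
      apply Finset.sum_congr rfl
      intro s' _
      rw [heI s' e]
    have mono_H : ∀ s : Fin n, ∀ u ∈ U, MonotoneOn (fun e => Hbar t e s u) (Set.Ici 0) := by
      intro s u hu x hx y hy hxy
      simp only
      rw [hHbar, hHbar]
      have hA : 0 ≤ ∑ s' : Fin n, Q s s' * p s' u :=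
        Finset.sum_nonneg fun s' _ => mul_nonneg (hQnn s s') ((hp01 s' u hu).1)
      refine add_le_add (add_le_add_right (mul_le_mul_of_nonneg_left (hdmono hx hy hxy) hA) _) ?_
      refine Finset.sum_le_sum fun s' _ => ?_
      refine mul_le_mul_of_nonneg_left ?_ (hQnn s s')
      refine add_le_add_right ?_ _
      exact mul_le_mul_of_nonneg_left (hmI s' hx hy hxy) ((hp01 s' u hu).1)
    have nonneg_H : ∀ s : Fin n, ∀ u ∈ U, ∀ e : ℝ, 0 ≤ Hbar t e s u := by
      intro s u hu e
      rw [hHbar]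
      have hA : 0 ≤ ∑ s' : Fin n, Q s s' * p s' u :=
        Finset.sum_nonneg fun s' _ => mul_nonneg (hQnn s s') ((hp01 s' u hu).1)
      have h1 : 0 ≤ lam u := hlamnn u hu
      have h2 : 0 ≤ (∑ s' : Fin n, Q s s' * p s' u) * d e := mul_nonneg hA (hdnn e)
      have h3 : 0 ≤ ∑ s' : Fin n, Q s s' *
          ((1 - p s' u) * (∫ w, J (t + 1) w s' * μ w) +
            p s' u * ∫ w, J (t + 1) (a * e + w) s' * μ w) :=
        Finset.sum_nonneg fun s' _ => mul_nonneg (hQnn s s')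
          (add_nonneg
            (mul_nonneg (by linarith [(hp01 s' u hu).2] : (0:ℝ) ≤ 1 - p s' u) (hKnn s'))
            (mul_nonneg (hp01 s' u hu).1 (hnnI s' _)))
      linarith
    have bound_H0 : ∀ (s : Fin n) (e : ℝ),
        Hbar t e s 0 ≤ Cd + ∑ s' : Fin n, Q s s' * Cf s' := by
      intro s e
      have hform : Hbar t e s 0 =
          d e + ∑ s' : Fin n, Q s s' * ∫ w, J (t + 1) (a * e + w) s' * μ w := by
        rw [hHbar]
        simp only [hp0, hlam0, mul_one, sub_self, zero_mul, zero_add, one_mul]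
        rw [hQrow s, one_mul]
      rw [hform]
      refine add_le_add (hCd e) ?_
      exact Finset.sum_le_sum fun s' _ =>
        mul_le_mul_of_nonneg_left (hleI s' _) (hQnn s s')
    intro s
    have hrec := hJrec t htT
    refine ⟨?_, ?_, ?_, ?_⟩
    · intro x
      rw [hrec (-x) s, hrec x s]
      exact congrArg (U.inf' ⟨0, hU0⟩) (funext fun u => even_H s u x)
    · intro x hx y hy hxy
      simp only
      rw [hrec x s, hrec y s]
      obtain ⟨u₀, hu₀, hEq⟩ := Finset.exists_mem_eq_inf' ⟨0, hU0⟩ (Hbar t y s)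
      rw [hEq]
      exact le_trans (Finset.inf'_le _ hu₀) (mono_H s u₀ hu₀ hx hy hxy)
    · intro e
      rw [hrec e s]
      exact Finset.le_inf' _ _ fun u hu => nonneg_H s u hu e
    · refine ⟨Cd + ∑ s' : Fin n, Q s s' * Cf s', fun e => ?_⟩
      rw [hrec e s]
      exact le_trans (Finset.inf'_le _ hU0) (bound_H0 s e)
  have key : ∀ k t, t + k = T + 1 → ∀ s : Fin n,
      (∀ x : ℝ, J t (-x) s = J t x s) ∧
        MonotoneOn (fun e => J t e s) (Set.Ici 0) ∧
        (∀ e : ℝ, 0 ≤ J t e s) ∧ ∃ C : ℝ, ∀ e : ℝ, J t e s ≤ C := by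
    intro k
    induction k with
    | zero =>
      intro t ht
      rw [show t = T + 1 by omega]
      exact base
    | succ k ih =>
      intro t ht
      exact step t (by omega) (ih (t + 1) (by omega))
  intro t ht s
  obtain ⟨he, hm, _, _⟩ := key (T + 1 - t) t (by omega) s
  exact ⟨he, VFQCAux.quasiconvex_of_even_mono he hm⟩
end

section
/- Consider the finite-horizon dynamic program defined in the context, and assume in addition that the channel transition matrix Q is stochastically monotone (for all i ≥ j and every ℓ, Σ_{k > ℓ} Q_{ik} ≥ Σ_{k > ℓ} Q_{jk}) and that p(s,u) is nonincreasing in the channel state s for each fixed power level u. Then for every t ∈ {0, 1, …, T+1} and every e ∈ ℝ, the value function J_t(e, s) is nonincreasing in s. -/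
open MeasureTheory

lemma my_abel_sum_le {n : ℕ} (Q : Fin n → Fin n → ℝ)
    (hQnn : ∀ i j : Fin n, 0 ≤ Q i j)
    (hQrow : ∀ i : Fin n, ∑ j : Fin n, Q i j = 1)
    (hQmono : ∀ i j : Fin n, j ≤ i → ∀ ℓ : Fin n,
      ∑ k ∈ Finset.univ.filter (fun k : Fin n => ℓ ≤ k), Q j k ≤
        ∑ k ∈ Finset.univ.filter (fun k : Fin n => ℓ ≤ k), Q i k)
    (i j : Fin n) (hij : j ≤ i) (f : Fin n → ℝ)
    (hf : ∀ k l : Fin n, k ≤ l → f l ≤ f k) :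
    ∑ k : Fin n, Q i k * f k ≤ ∑ k : Fin n, Q j k * f k := by
  have hn : 0 < n := i.pos
  set N : ℕ := n - 1 with hN
  have hNn : N < n := by omega
  set G : ℕ → ℝ := fun m => f ⟨min m N, by omega⟩ with hG
  set D : ℕ → ℝ := fun m => G m - G (m + 1) with hD
  have hDnn : ∀ m, 0 ≤ D m := by
    intro m
    have : G (m + 1) ≤ G m := by
      apply hf
      simp only [hG, Fin.mk_le_mk]
      omega
    simp only [hD]; linarith
  have hfk : ∀ k : Fin n, f k = G N + ∑ m ∈ Finset.Ico k.val N, D m := by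
    intro k
    have hkN : k.val ≤ N := by have := k.isLt; omega
    have h1 : ∑ m ∈ Finset.Ico k.val N, D m = G k.val - G N := by
      rw [Finset.sum_Ico_eq_sum_range]
      have h2 := Finset.sum_range_sub' (f := fun r => G (k.val + r)) (n := N - k.val)
      calc ∑ r ∈ Finset.range (N - k.val), D (k.val + r)
          = ∑ r ∈ Finset.range (N - k.val), (G (k.val + r) - G (k.val + (r + 1))) := by
            apply Finset.sum_congr rfl
            intro r _
            simp only [hD]
            ring_nf
        _ = G (k.val + 0) - G (k.val + (N - k.val)) := h2
        _ = G k.val - G N := by congr 2 <;> omega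
    have h2 : G k.val = f k := by
      simp only [hG]
      congr 1
      apply Fin.ext
      simpa using min_eq_left hkN
    rw [h1, h2]; ring
  have hIco : ∀ k : Fin n, Finset.Ico k.val N = (Finset.range N).filter (fun m => k.val ≤ m) := by
    intro k
    ext m
    simp only [Finset.mem_Ico, Finset.mem_filter, Finset.mem_range]
    tauto
  have key : ∀ r : Fin n, ∑ k : Fin n, Q r k * f k
      = G N + ∑ m ∈ Finset.range N, D m *
          (1 - ∑ k ∈ Finset.univ.filter (fun k : Fin n => m + 1 ≤ k.val), Q r k) := by
    intro r
    have step1 : ∑ k : Fin n, Q r k * f k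
        = ∑ k : Fin n, (Q r k * G N +
            ∑ m ∈ Finset.range N, (if k.val ≤ m then Q r k * D m else 0)) := by
      apply Finset.sum_congr rfl
      intro k _
      rw [hfk k, mul_add, Finset.mul_sum, hIco k, Finset.sum_filter]
    rw [step1, Finset.sum_add_distrib, ← Finset.sum_mul, hQrow, one_mul, Finset.sum_comm]
    congr 1
    apply Finset.sum_congr rfl
    intro m hm
    have hmN : m < N := Finset.mem_range.mp hm
    have hsplit :
        (∑ k ∈ Finset.univ.filter (fun k : Fin n => k.val ≤ m), Q r k) +
          ∑ k ∈ Finset.univ.filter (fun k : Fin n => ¬ k.val ≤ m), Q r k = 1 := by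
      rw [Finset.sum_filter_add_sum_filter_not]
      exact hQrow r
    have hset : Finset.univ.filter (fun k : Fin n => ¬ k.val ≤ m)
        = Finset.univ.filter (fun k : Fin n => m + 1 ≤ k.val) := by
      apply Finset.filter_congr
      intro k _
      simp only [not_le]
      exact ⟨Nat.succ_le_of_lt, Nat.lt_of_succ_le⟩
    calc ∑ k : Fin n, (if k.val ≤ m then Q r k * D m else 0)
        = ∑ k ∈ Finset.univ.filter (fun k : Fin n => k.val ≤ m), Q r k * D m := by
          rw [Finset.sum_filter]
      _ = (∑ k ∈ Finset.univ.filter (fun k : Fin n => k.val ≤ m), Q r k) * D m := by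
          rw [Finset.sum_mul]
      _ = D m * (1 - ∑ k ∈ Finset.univ.filter (fun k : Fin n => m + 1 ≤ k.val), Q r k) := by
          rw [← hset]
          have h9 : ∑ k ∈ Finset.univ.filter (fun k : Fin n => k.val ≤ m), Q r k
              = 1 - ∑ k ∈ Finset.univ.filter (fun k : Fin n => ¬ k.val ≤ m), Q r k := by
            linarith [hsplit]
          rw [h9]; ring
  rw [key i, key j]
  apply add_le_add_right
  apply Finset.sum_le_sum
  intro m hm
  have hmN : m < N := Finset.mem_range.mp hm
  have hm1 : m + 1 < n := by omega
  have hmono := hQmono i j hij ⟨m + 1, hm1⟩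
  have hset : ∀ r : Fin n,
      ∑ k ∈ Finset.univ.filter (fun k : Fin n => (⟨m + 1, hm1⟩ : Fin n) ≤ k), Q r k
      = ∑ k ∈ Finset.univ.filter (fun k : Fin n => m + 1 ≤ k.val), Q r k := by
    intro r
    apply Finset.sum_congr
    · apply Finset.filter_congr
      intro k _
      simp [Fin.le_def]
    · intros; rfl
  rw [hset i, hset j] at hmono
  have := hDnn m
  nlinarith


-- measure of a centered interval shrinks as the window slides right
lemma my_window (μ : ℝ → ℝ) (hμint : Integrable μ)
    (hμanti : ∀ x y : ℝ, |x| ≤ |y| → μ y ≤ μ x)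
    (b c₁ c₂ : ℝ) (hb : 0 ≤ b) (hc1 : 0 ≤ c₁) (hc12 : c₁ ≤ c₂) :
    ∫ x in (-b - c₂)..(b - c₂), μ x ≤ ∫ x in (-b - c₁)..(b - c₁), μ x := by
  have hii : ∀ p q : ℝ, IntervalIntegrable μ volume p q := fun p q => hμint.intervalIntegrable
  have e1 : (∫ x in (-b - c₂)..(b - c₂), μ x) + ∫ x in (b - c₂)..(b - c₁), μ x
      = ∫ x in (-b - c₂)..(b - c₁), μ x :=
    intervalIntegral.integral_add_adjacent_intervals (hii _ _) (hii _ _)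
  have e2 : (∫ x in (-b - c₂)..(-b - c₁), μ x) + ∫ x in (-b - c₁)..(b - c₁), μ x
      = ∫ x in (-b - c₂)..(b - c₁), μ x :=
    intervalIntegral.integral_add_adjacent_intervals (hii _ _) (hii _ _)
  have hLR : ∫ x in (-b - c₂)..(-b - c₁), μ x ≤ ∫ x in (b - c₂)..(b - c₁), μ x := by
    have hcomp : ∫ x in (b - c₂)..(b - c₁), μ (x - 2 * b)
        = ∫ x in (-b - c₂)..(-b - c₁), μ x := by
      rw [intervalIntegral.integral_comp_sub_right (fun x => μ x) (2 * b)]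
      norm_num
      ring_nf
    rw [← hcomp]
    have hii2 : IntervalIntegrable (fun x => μ (x - 2 * b)) volume (b - c₂) (b - c₁) :=
      (hμint.comp_sub_right (2 * b)).intervalIntegrable
    apply intervalIntegral.integral_mono_on (by linarith : b - c₂ ≤ b - c₁) hii2 (hii _ _)
    intro x hx
    obtain ⟨hx1, hx2⟩ := hx
    apply hμanti
    rw [abs_of_nonpos (by linarith : x - 2 * b ≤ 0)]
    rw [abs_le]
    constructor <;> linarith
  linarith


lemma my_shift_mono (μ : ℝ → ℝ) (hμmeas : Measurable μ) (hμnn : ∀ x : ℝ, 0 ≤ μ x)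
    (hμint : Integrable μ) (hμone : ∫ x : ℝ, μ x = 1)
    (hμanti : ∀ x y : ℝ, |x| ≤ |y| → μ y ≤ μ x)
    (g : ℝ → ℝ) (hgmeas : Measurable g) (hg0 : ∀ x, 0 ≤ g x) (C : ℝ) (hgC : ∀ x, g x ≤ C)
    (hgP : ∀ x y : ℝ, |x| ≤ |y| → g x ≤ g y)
    (c₁ c₂ : ℝ) (hc : |c₁| ≤ |c₂|) :
    ∫ w, g (c₁ + w) * μ w ≤ ∫ w, g (c₂ + w) * μ w := by
  have hgeven : ∀ x : ℝ, g (-x) = g x := by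
    intro x
    have h1 := hgP (-x) x (by simp)
    have h2 := hgP x (-x) (by simp)
    linarith
  have hμeven : ∀ x : ℝ, μ (-x) = μ x := by
    intro x
    have h1 := hμanti (-x) x (by simp)
    have h2 := hμanti x (-x) (by simp)
    linarith
  -- reduce to nonnegative shifts
  have habs : ∀ c : ℝ, ∫ w, g (c + w) * μ w = ∫ w, g (|c| + w) * μ w := by
    intro c
    rcases le_or_gt 0 c with h | h
    · rw [abs_of_nonneg h]
    · rw [abs_of_neg h]
      have : (fun w => g (-c + w) * μ w) = fun w => (fun v => g (c + v) * μ v) (-w) := by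
        funext w
        simp only
        rw [hμeven, ← hgeven (c + -w)]
        ring_nf
      rw [this]
      exact (integral_neg_eq_self _ volume).symm
  rw [habs c₁, habs c₂]
  have hc' : |c₁| ≤ |c₂| := hc
  generalize hd1 : |c₁| = e₁ at *
  generalize hd2 : |c₂| = e₂ at *
  have he1 : 0 ≤ e₁ := by rw [← hd1]; positivity
  have he2 : 0 ≤ e₂ := by rw [← hd2]; positivity
  clear hd1 hd2 hc
  -- now prove for 0 ≤ e₁ ≤ e₂
  have hC0 : 0 ≤ C := le_trans (hg0 0) (hgC 0)
  set m : ℝ → ENNReal := fun x => ENNReal.ofReal (μ x) with hm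
  have hmmeas : Measurable m := hμmeas.ennreal_ofReal
  set ρ : Measure ℝ := volume.withDensity m with hρ
  have hρuniv : ρ Set.univ = 1 := by
    rw [hρ, withDensity_apply _ MeasurableSet.univ, Measure.restrict_univ]
    rw [← ofReal_integral_eq_lintegral_ofReal hμint (Filter.Eventually.of_forall hμnn)]
    rw [hμone]
    simp
  have hρpt : ∀ x : ℝ, ρ {x} = 0 := by
    intro x
    rw [hρ, withDensity_apply _ (measurableSet_singleton x)]
    exact setLIntegral_measure_zero _ _ (measure_singleton x)
  have hρIoo : ∀ p q : ℝ, p ≤ q → ρ (Set.Ioo p q) = ENNReal.ofReal (∫ x in p..q, μ x) := by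
    intro p q hpq
    rw [hρ, withDensity_apply _ measurableSet_Ioo]
    rw [← ofReal_integral_eq_lintegral_ofReal (hμint.integrableOn)
      (Filter.Eventually.of_forall hμnn)]
    rw [intervalIntegral.integral_of_le hpq, integral_Ioc_eq_integral_Ioo]
  -- key superlevel-set comparison
  have hlevel : ∀ t : ℝ, ρ {w | g (e₂ + w) ≤ t} ≤ ρ {w | g (e₁ + w) ≤ t} := by
    intro t
    set T : Set ℝ := {x | g x ≤ t} with hT
    have hTdc : ∀ x y : ℝ, x ∈ T → |y| ≤ |x| → y ∈ T :=
      fun x y hx hyx => le_trans (hgP y x hyx) hx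
    have hpre : ∀ c : ℝ, {w | g (c + w) ≤ t} = (fun w => c + w) ⁻¹' T := fun c => rfl
    rcases Set.eq_empty_or_nonempty T with hTe | hTne
    · rw [hpre, hpre, hTe]
      simp
    by_cases hbdd : BddAbove (abs '' T)
    · have hsne : (abs '' T).Nonempty := hTne.image _
      set b : ℝ := sSup (abs '' T) with hb
      have hb0 : 0 ≤ b := by
        obtain ⟨x, hx⟩ := hTne
        exact le_trans (abs_nonneg x) (le_csSup hbdd ⟨x, hx, rfl⟩)
      have hsub1 : Set.Ioo (-b) b ⊆ T := by
        intro y hy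
        have hyb : |y| < b := abs_lt.mpr ⟨hy.1, hy.2⟩
        obtain ⟨z, hz, hyz⟩ := exists_lt_of_lt_csSup hsne hyb
        obtain ⟨x, hxT, hxz⟩ := hz
        exact hTdc x y hxT (by rw [hxz]; exact le_of_lt hyz)
      have hsub2 : T ⊆ Set.Icc (-b) b := by
        intro x hx
        have : |x| ≤ b := le_csSup hbdd ⟨x, hx, rfl⟩
        exact ⟨by cases abs_le.mp this; linarith, (abs_le.mp this).2⟩
      have hmeasure : ∀ c : ℝ, ρ ((fun w => c + w) ⁻¹' T) = ρ (Set.Ioo (-b - c) (b - c)) := by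
        intro c
        apply le_antisymm
        · have h1 : (fun w => c + w) ⁻¹' T ⊆ Set.Icc (-b - c) (b - c) := by
            intro w hw
            have h2 := hsub2 hw
            simp only [Set.mem_Icc] at h2 ⊢
            constructor <;> linarith [h2.1, h2.2]
          calc ρ ((fun w => c + w) ⁻¹' T) ≤ ρ (Set.Icc (-b - c) (b - c)) := measure_mono h1
            _ ≤ ρ (Set.Ioo (-b - c) (b - c) ∪ ({-b - c} ∪ {b - c})) := by
                apply measure_mono
                intro x hx
                rcases lt_or_eq_of_le hx.1 with h | h
                · rcases lt_or_eq_of_le hx.2 with h' | h'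
                  · exact Or.inl ⟨h, h'⟩
                  · exact Or.inr (Or.inr (by simp [h']))
                · exact Or.inr (Or.inl (by simp [← h]))
            _ ≤ ρ (Set.Ioo (-b - c) (b - c)) + ρ ({-b - c} ∪ {b - c}) := measure_union_le _ _
            _ ≤ ρ (Set.Ioo (-b - c) (b - c)) + (ρ {-b - c} + ρ {b - c}) := by
                exact add_le_add_right (measure_union_le _ _) _
            _ = ρ (Set.Ioo (-b - c) (b - c)) := by rw [hρpt, hρpt]; simp
        · apply measure_mono
          intro w hw
          simp only [Set.mem_Ioo] at hw
          apply hsub1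
          simp only [Set.mem_Ioo]
          constructor <;> linarith [hw.1, hw.2]
      rw [hpre, hpre, hmeasure, hmeasure]
      rw [hρIoo _ _ (by linarith), hρIoo _ _ (by linarith)]
      exact ENNReal.ofReal_le_ofReal
        (my_window μ hμint hμanti b e₁ e₂ hb0 he1 hc')
    · have hTuniv : T = Set.univ := by
        apply Set.eq_univ_of_forall
        intro y
        rw [not_bddAbove_iff] at hbdd
        obtain ⟨z, hz, hyz⟩ := hbdd |y|
        obtain ⟨x, hxT, hxz⟩ := hz
        exact hTdc x y hxT (by rw [hxz]; exact le_of_lt hyz)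
      rw [hpre, hpre, hTuniv]
      simp
  -- layer cake and conclusion
  have hintc : ∀ c : ℝ, Integrable (fun w => g (c + w) * μ w) := by
    intro c
    apply Integrable.mono' (hμint.const_mul C)
    · exact ((hgmeas.comp (by fun_prop : Measurable fun w : ℝ => c + w)).mul hμmeas).aestronglyMeasurable
    · apply Filter.Eventually.of_forall
      intro w
      rw [Real.norm_eq_abs, abs_of_nonneg (mul_nonneg (hg0 _) (hμnn _))]
      exact mul_le_mul_of_nonneg_right (hgC _) (hμnn _)
  have hmc : ∀ c : ℝ, Measurable fun w : ℝ => g (c + w) := by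
    intro c
    exact hgmeas.comp (by fun_prop)
  set L : ℝ → ENNReal := fun c => ∫⁻ w, ENNReal.ofReal (g (c + w)) ∂ρ with hL
  have hLeq : ∀ c : ℝ, ∫ w, g (c + w) * μ w = (L c).toReal := by
    intro c
    rw [integral_eq_lintegral_of_nonneg_ae
      (Filter.Eventually.of_forall (fun w => mul_nonneg (hg0 _) (hμnn _)))
      ((hmc c).mul hμmeas).aestronglyMeasurable]
    congr 1
    show ∫⁻ a : ℝ, ENNReal.ofReal (g (c + a) * μ a) ∂volume
        = ∫⁻ w : ℝ, ENNReal.ofReal (g (c + w)) ∂(volume.withDensity m)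
    rw [lintegral_withDensity_eq_lintegral_mul _ hmmeas
      ((hmc c).ennreal_ofReal)]
    apply lintegral_congr
    intro w
    simp only [hm, Pi.mul_apply]
    rw [mul_comm (g (c + w)) (μ w), ENNReal.ofReal_mul (hμnn w)]
  have hLlayer : ∀ c : ℝ, L c = ∫⁻ s in Set.Ioi (0:ℝ), ρ {w | s < g (c + w)} := by
    intro c
    exact lintegral_eq_lintegral_meas_lt ρ
      (Filter.Eventually.of_forall (fun w => hg0 _))
      (hmc c).aemeasurable
  have hLmono : L e₁ ≤ L e₂ := by
    rw [hLlayer, hLlayer]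
    apply lintegral_mono
    intro s
    show ρ {w | s < g (e₁ + w)} ≤ ρ {w | s < g (e₂ + w)}
    have hcompl : ∀ c : ℝ, {w | s < g (c + w)} = {w | g (c + w) ≤ s}ᶜ := by
      intro c; ext w; simp [not_le]
    rw [hcompl, hcompl]
    have hms : ∀ c : ℝ, MeasurableSet {w : ℝ | g (c + w) ≤ s} := by
      intro c
      exact measurableSet_le (hmc c) measurable_const
    have hfin : ∀ S : Set ℝ, ρ S ≠ ⊤ := by
      intro S
      apply ne_top_of_le_ne_top _ (measure_mono (Set.subset_univ S))
      rw [hρuniv]; exact ENNReal.one_ne_top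
    rw [measure_compl (hms e₁) (hfin _), measure_compl (hms e₂) (hfin _)]
    exact tsub_le_tsub_left (hlevel s) _
  have hLfin : L e₂ ≠ ⊤ := by
    apply ne_top_of_le_ne_top (b := ENNReal.ofReal C * 1)
    · simp [ENNReal.mul_ne_top, ENNReal.ofReal_ne_top]
    · calc L e₂ ≤ ∫⁻ _, ENNReal.ofReal C ∂ρ :=
            lintegral_mono (fun w => ENNReal.ofReal_le_ofReal (hgC _))
        _ = ENNReal.ofReal C * ρ Set.univ := by rw [lintegral_const]
        _ = ENNReal.ofReal C * 1 := by rw [hρuniv]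
  rw [hLeq, hLeq]
  exact ENNReal.toReal_mono hLfin hLmono


lemma my_measurable_inf' (s : Finset ℝ) (hs : s.Nonempty) (F : ℝ → ℝ → ℝ)
    (hF : ∀ u ∈ s, Measurable (F u)) :
    Measurable (fun e => s.inf' hs (fun u => F u e)) := by
  induction hs using Finset.Nonempty.cons_induction with
  | singleton a => simpa using hF a (by simp)
  | cons a t ha ht ih =>
    have h1 : Measurable (F a) := hF a (by simp)
    have h2 := ih (fun u hu => hF u (by simp [hu]))
    have he : (fun e => (Finset.cons a t ha).inf' (Finset.cons_nonempty ha) fun u => F u e)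
        = fun e => F a e ⊓ t.inf' ht fun u => F u e := by
      funext e
      exact Finset.inf'_cons (α := ℝ) (H := ht) (f := fun u => F u e)
    rw [he]
    exact h1.inf h2


/-- Part 2 of Theorem 4 of the paper: if in addition the channel transition
matrix `Q` is stochastically monotone and the drop probability `p s u` is
nonincreasing in the channel state `s`, then the value function `J t e s` of
the finite-horizon dynamic program is nonincreasing in `s`. -/
theorem value_function_antitone_in_channel_state
    (T n : ℕ) (a : ℝ)
    (U : Finset ℝ) (hU0 : (0 : ℝ) ∈ U) (hUnn : ∀ u ∈ U, (0 : ℝ) ≤ u)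
    (μ : ℝ → ℝ) (hμmeas : Measurable μ) (hμnn : ∀ x : ℝ, 0 ≤ μ x)
    (hμone : ∫ x : ℝ, μ x = 1)
    (hμeven : ∀ x : ℝ, μ (-x) = μ x)
    (hμmono : AntitoneOn μ (Set.Ici (0 : ℝ)))
    (d : ℝ → ℝ) (hdmeas : Measurable d) (hdnn : ∀ x : ℝ, 0 ≤ d x)
    (hdbd : ∃ C : ℝ, ∀ x : ℝ, d x ≤ C)
    (hdeven : ∀ x : ℝ, d (-x) = d x)
    (hdqc : QuasiconvexOn ℝ Set.univ d) (hd0 : d 0 = 0)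
    (lam : ℝ → ℝ) (hlam_mono : MonotoneOn lam U) (hlam0 : lam 0 = 0)
    (hlamnn : ∀ u ∈ U, 0 ≤ lam u)
    (p : Fin n → ℝ → ℝ)
    (hp0 : ∀ s : Fin n, p s 0 = 1)
    (hp01 : ∀ s : Fin n, ∀ u ∈ U, p s u ∈ Set.Icc (0 : ℝ) 1)
    (hpu : ∀ s : Fin n, ∀ u ∈ U, ∀ v ∈ U, u ≤ v → p s v ≤ p s u)
    (Q : Fin n → Fin n → ℝ)
    (hQnn : ∀ i j : Fin n, 0 ≤ Q i j)
    (hQrow : ∀ i : Fin n, ∑ j : Fin n, Q i j = 1)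
    (hQmono : ∀ i j : Fin n, j ≤ i → ∀ ℓ : Fin n,
      ∑ k ∈ Finset.univ.filter (fun k : Fin n => ℓ ≤ k), Q j k ≤
        ∑ k ∈ Finset.univ.filter (fun k : Fin n => ℓ ≤ k), Q i k)
    (hps : ∀ u ∈ U, ∀ s s' : Fin n, s ≤ s' → p s' u ≤ p s u)
    (J : ℕ → ℝ → Fin n → ℝ)
    (Hbar : ℕ → ℝ → Fin n → ℝ → ℝ)
    (hHbar : ∀ (t : ℕ) (e : ℝ) (s : Fin n) (u : ℝ),
      Hbar t e s u =
        lam u + (∑ s' : Fin n, Q s s' * p s' u) * d e +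
          ∑ s' : Fin n, Q s s' *
            ((1 - p s' u) * (∫ w : ℝ, J (t + 1) w s' * μ w) +
              p s' u * (∫ w : ℝ, J (t + 1) (a * e + w) s' * μ w)))
    (hJT : ∀ (e : ℝ) (s : Fin n), J (T + 1) e s = 0)
    (hJrec : ∀ t ≤ T, ∀ (e : ℝ) (s : Fin n),
      J t e s = U.inf' ⟨0, hU0⟩ (Hbar t e s)) :
    ∀ t ≤ T + 1, ∀ e : ℝ, ∀ s s' : Fin n, s ≤ s' →
      J t e s' ≤ J t e s := by
  classical
  have hμint : Integrable μ := by
    by_contra h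
    rw [integral_undef h] at hμone
    norm_num at hμone
  have hμanti : ∀ x y : ℝ, |x| ≤ |y| → μ y ≤ μ x := by
    intro x y hxy
    have hx : μ |x| = μ x := by
      rcases le_or_gt 0 x with h | h
      · rw [abs_of_nonneg h]
      · rw [abs_of_neg h, hμeven]
    have hy : μ |y| = μ y := by
      rcases le_or_gt 0 y with h | h
      · rw [abs_of_nonneg h]
      · rw [abs_of_neg h, hμeven]
    rw [← hx, ← hy]
    exact hμmono (Set.mem_Ici.mpr (abs_nonneg x)) (Set.mem_Ici.mpr (abs_nonneg y)) hxy
  have hdP : ∀ x y : ℝ, |x| ≤ |y| → d x ≤ d y := by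
    intro x y hxy
    have hconv : Convex ℝ {z | z ∈ Set.univ ∧ d z ≤ d y} := hdqc (d y)
    have hyS : y ∈ {z | z ∈ Set.univ ∧ d z ≤ d y} := ⟨trivial, le_refl _⟩
    have hyS' : -y ∈ {z | z ∈ Set.univ ∧ d z ≤ d y} := ⟨trivial, by rw [hdeven]⟩
    have habs := abs_le.mp hxy
    have hseg : x ∈ segment ℝ (-y) y := by
      rcases le_or_gt 0 y with h | h
      · rw [segment_eq_Icc (by linarith : -y ≤ y)]
        rw [abs_of_nonneg h] at habs
        exact ⟨habs.1, habs.2⟩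
      · rw [segment_symm, segment_eq_Icc (by linarith : y ≤ -y)]
        rw [abs_of_neg h] at habs
        exact ⟨by linarith [habs.2], by linarith [habs.1]⟩
    exact (hconv.segment_subset hyS' hyS hseg).2
  obtain ⟨Cd, hCd⟩ := hdbd
  suffices H : ∀ k t : ℕ, T + 1 = t + k →
      ((∀ s, Measurable fun e => J t e s) ∧
       (∀ e s, 0 ≤ J t e s) ∧
       (∃ C : ℝ, 0 ≤ C ∧ ∀ e s, J t e s ≤ C) ∧
       (∀ s (x y : ℝ), |x| ≤ |y| → J t x s ≤ J t y s) ∧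
       (∀ e (s s' : Fin n), s ≤ s' → J t e s' ≤ J t e s)) by
    intro t ht e s s' hss
    exact (H (T + 1 - t) t (by omega)).2.2.2.2 e s s' hss
  intro k
  induction k with
  | zero =>
    intro t ht
    have ht' : t = T + 1 := by omega
    subst ht'
    refine ⟨fun s => by simp only [hJT]; exact measurable_const,
      fun e s => by simp [hJT],
      ⟨0, le_refl 0, fun e s => by simp [hJT]⟩,
      fun s x y _ => by simp [hJT],
      fun e s s' _ => by simp [hJT]⟩
  | succ k ih =>
    intro t ht
    have htT : t ≤ T := by omega
    obtain ⟨hmeas, hnn, ⟨C, hC0, hbd⟩, hP, hanti⟩ := ih (t + 1) (by omega)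
    set A : Fin n → ℝ := fun s' => ∫ w : ℝ, J (t + 1) w s' * μ w with hA_def
    set B : ℝ → Fin n → ℝ := fun e s' => ∫ w : ℝ, J (t + 1) (a * e + w) s' * μ w with hB_def
    have hint : ∀ (c : ℝ) (s' : Fin n), Integrable (fun w => J (t + 1) (c + w) s' * μ w) := by
      intro c s'
      apply Integrable.mono' (hμint.const_mul C)
      · exact (((hmeas s').comp (by fun_prop : Measurable fun w : ℝ => c + w)).mul
          hμmeas).aestronglyMeasurable
      · apply Filter.Eventually.of_forall
        intro w
        rw [Real.norm_eq_abs, abs_of_nonneg (mul_nonneg (hnn _ _) (hμnn _))]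
        exact mul_le_mul_of_nonneg_right (hbd _ _) (hμnn _)
    have hintA : ∀ s' : Fin n, Integrable (fun w => J (t + 1) w s' * μ w) := by
      intro s'
      have := hint 0 s'
      simpa using this
    have hshift : ∀ (s' : Fin n) (c₁ c₂ : ℝ), |c₁| ≤ |c₂| →
        ∫ w : ℝ, J (t + 1) (c₁ + w) s' * μ w ≤ ∫ w : ℝ, J (t + 1) (c₂ + w) s' * μ w := by
      intro s' c₁ c₂ hc
      exact my_shift_mono μ hμmeas hμnn hμint hμone hμanti
        (fun x => J (t + 1) x s') (hmeas s') (fun x => hnn x s') C (fun x => hbd x s')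
        (fun x y h => hP s' x y h) c₁ c₂ hc
    have hA0 : ∀ s', 0 ≤ A s' := by
      intro s'
      exact integral_nonneg (fun w => mul_nonneg (hnn _ _) (hμnn _))
    have hB0 : ∀ e s', 0 ≤ B e s' := by
      intro e s'
      exact integral_nonneg (fun w => mul_nonneg (hnn _ _) (hμnn _))
    have hBC : ∀ e s', B e s' ≤ C := by
      intro e s'
      have h1 : B e s' ≤ ∫ w : ℝ, C * μ w := by
        apply integral_mono (hint (a * e) s') (hμint.const_mul C)
        intro w
        exact mul_le_mul_of_nonneg_right (hbd _ _) (hμnn w)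
      calc B e s' ≤ ∫ w : ℝ, C * μ w := h1
        _ = C := by rw [integral_const_mul, hμone, mul_one]
    have hAB : ∀ (e : ℝ) (s' : Fin n), A s' ≤ B e s' := by
      intro e s'
      have h0 : A s' = ∫ w : ℝ, J (t + 1) ((0:ℝ) + w) s' * μ w := by
        simp only [hA_def, zero_add]
      rw [h0]
      exact hshift s' 0 (a * e) (by simpa using abs_nonneg (a * e))
    have hBshift : ∀ (s' : Fin n) (x y : ℝ), |x| ≤ |y| → B x s' ≤ B y s' := by
      intro s' x y hxy
      apply hshift s' (a * x) (a * y)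
      rw [abs_mul, abs_mul]
      exact mul_le_mul_of_nonneg_left hxy (abs_nonneg a)
    have hAanti : ∀ k l : Fin n, k ≤ l → A l ≤ A k := by
      intro k l hkl
      apply integral_mono (hintA l) (hintA k)
      intro w
      exact mul_le_mul_of_nonneg_right (hanti w k l hkl) (hμnn w)
    have hBanti : ∀ (e : ℝ) (k l : Fin n), k ≤ l → B e l ≤ B e k := by
      intro e k l hkl
      apply integral_mono (hint (a * e) l) (hint (a * e) k)
      intro w
      exact mul_le_mul_of_nonneg_right (hanti _ k l hkl) (hμnn w)
    have hBmeas : ∀ s' : Fin n, Measurable (fun e => B e s') := by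
      intro s'
      have hjoint : StronglyMeasurable (fun q : ℝ × ℝ => J (t + 1) (a * q.1 + q.2) s' * μ q.2) :=
        (((hmeas s').comp ((measurable_fst.const_mul a).add measurable_snd)).mul
          (hμmeas.comp measurable_snd)).stronglyMeasurable
      exact hjoint.integral_prod_right'.measurable
    have hH : ∀ (e : ℝ) (s : Fin n) (u : ℝ), Hbar t e s u
        = lam u + ∑ s' : Fin n, Q s s' *
            (p s' u * d e + ((1 - p s' u) * A s' + p s' u * B e s')) := by
      intro e s u
      rw [hHbar, Finset.sum_mul, add_assoc, ← Finset.sum_add_distrib]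
      congr 1
      apply Finset.sum_congr rfl
      intro s' _
      simp only [hA_def, hB_def]
      ring
    have hJmeas : ∀ s, Measurable fun e => J t e s := by
      intro s
      have h1 : (fun e => J t e s) = fun e => U.inf' ⟨0, hU0⟩ (fun u => Hbar t e s u) := by
        funext e; exact hJrec t htT e s
      rw [h1]
      apply my_measurable_inf' U ⟨0, hU0⟩ (fun u e => Hbar t e s u)
      intro u _
      have h2 : (fun e => Hbar t e s u) = fun e =>
          lam u + ∑ s' : Fin n, Q s s' *
            (p s' u * d e + ((1 - p s' u) * A s' + p s' u * B e s')) := by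
        funext e; exact hH e s u
      rw [h2]
      apply Measurable.add measurable_const
      apply Finset.measurable_sum
      intro s' _
      apply Measurable.const_mul
      apply Measurable.add (hdmeas.const_mul _)
      apply Measurable.add measurable_const
      exact (hBmeas s').const_mul _
    have hJnn : ∀ e s, 0 ≤ J t e s := by
      intro e s
      rw [hJrec t htT e s]
      apply Finset.le_inf'
      intro u hu
      rw [hH e s u]
      obtain ⟨hplam⟩ := And.intro (hlamnn u hu) trivial
      apply add_nonneg (hlamnn u hu)
      apply Finset.sum_nonneg
      intro s' _
      obtain ⟨hq0, hq1⟩ := hp01 s' u hu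
      apply mul_nonneg (hQnn s s')
      apply add_nonneg (mul_nonneg hq0 (hdnn e))
      exact add_nonneg (mul_nonneg (by linarith) (hA0 s')) (mul_nonneg hq0 (hB0 e s'))
    have hJbd : ∀ e s, J t e s ≤ Cd + C := by
      intro e s
      rw [hJrec t htT e s]
      apply le_trans (Finset.inf'_le _ hU0)
      rw [hH e s 0, hlam0, zero_add]
      have h3 : ∀ s' : Fin n, Q s s' * (p s' 0 * d e + ((1 - p s' 0) * A s' + p s' 0 * B e s'))
          = Q s s' * (d e + B e s') := by
        intro s'; rw [hp0 s']; ring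
      rw [Finset.sum_congr rfl (fun s' _ => h3 s')]
      calc ∑ s' : Fin n, Q s s' * (d e + B e s')
          ≤ ∑ s' : Fin n, Q s s' * (Cd + C) := by
            apply Finset.sum_le_sum
            intro s' _
            exact mul_le_mul_of_nonneg_left (add_le_add (hCd e) (hBC e s')) (hQnn s s')
        _ = Cd + C := by rw [← Finset.sum_mul, hQrow, one_mul]
    have hCd0 : 0 ≤ Cd := le_trans (hdnn 0) (hCd 0)
    have hJP : ∀ s (x y : ℝ), |x| ≤ |y| → J t x s ≤ J t y s := by
      intro s x y hxy
      rw [hJrec t htT x s, hJrec t htT y s]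
      apply Finset.le_inf'
      intro u hu
      apply le_trans (Finset.inf'_le _ hu)
      rw [hH x s u, hH y s u]
      apply add_le_add_right
      apply Finset.sum_le_sum
      intro s' _
      apply mul_le_mul_of_nonneg_left _ (hQnn s s')
      obtain ⟨hq0, hq1⟩ := hp01 s' u hu
      apply add_le_add (mul_le_mul_of_nonneg_left (hdP x y hxy) hq0)
      exact add_le_add_right (mul_le_mul_of_nonneg_left (hBshift s' x y hxy) hq0) _
    have hJanti : ∀ e (s s'' : Fin n), s ≤ s'' → J t e s'' ≤ J t e s := by
      intro e s s'' hss
      rw [hJrec t htT e s, hJrec t htT e s'']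
      apply Finset.le_inf'
      intro u hu
      apply le_trans (Finset.inf'_le _ hu)
      rw [hH e s'' u, hH e s u]
      apply add_le_add_right
      apply my_abel_sum_le Q hQnn hQrow hQmono s'' s hss
      intro k l hkl
      obtain ⟨hpk0, hpk1⟩ := hp01 k u hu
      obtain ⟨hpl0, hpl1⟩ := hp01 l u hu
      have hpkl : p l u ≤ p k u := hps u hu k l hkl
      have hAkl : A l ≤ A k := hAanti k l hkl
      have hBkl : B e l ≤ B e k := hBanti e k l hkl
      have hABk : A k ≤ d e + B e k := le_trans (hAB e k) (by linarith [hdnn e])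
      nlinarith [mul_le_mul_of_nonneg_left hAkl (by linarith : (0:ℝ) ≤ 1 - p l u),
        mul_le_mul_of_nonneg_left hBkl hpl0,
        mul_nonneg (sub_nonneg.mpr hpkl) (sub_nonneg.mpr hABk)]
    exact ⟨hJmeas, hJnn, ⟨Cd + C, by linarith, hJbd⟩, hJP, hJanti⟩
end

section
/- Consider the finite-horizon dynamic program defined in the context. Then for every t ∈ {0, 1, …, T} and every channel state s ∈ S, there exists an optimal prescription f : ℝ → U — i.e., a function satisfying H̄_t(e, s, f(e)) = min_{u ∈ U} H̄_t(e, s, u) for every e ∈ ℝ — that is even and quasiconvex. -/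
open MeasureTheory


lemma aux_abs_le_abs_of_sq (x y : ℝ) (h : x^2 ≤ y^2) : |x| ≤ |y| := by
  by_contra hc
  push_neg at hc
  nlinarith [sq_abs x, sq_abs y, abs_nonneg y]

lemma aux_even_apply_abs (g : ℝ → ℝ) (hge : ∀ x, g (-x) = g x) (x : ℝ) : g |x| = g x := by
  rcases abs_cases x with ⟨h, _⟩ | ⟨h, _⟩
  · rw [h]
  · rw [h, hge]

lemma aux_evenMono_le {g : ℝ → ℝ} (hge : ∀ x, g (-x) = g x)
    (hgm : MonotoneOn g (Set.Ici (0:ℝ))) {x y : ℝ} (h : |x| ≤ |y|) : g x ≤ g y := by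
  rw [← aux_even_apply_abs g hge x, ← aux_even_apply_abs g hge y]
  exact hgm (abs_nonneg x) (abs_nonneg y) h

lemma aux_evenAnti_le {g : ℝ → ℝ} (hge : ∀ x, g (-x) = g x)
    (hgm : AntitoneOn g (Set.Ici (0:ℝ))) {x y : ℝ} (h : |x| ≤ |y|) : g y ≤ g x := by
  rw [← aux_even_apply_abs g hge x, ← aux_even_apply_abs g hge y]
  exact hgm (abs_nonneg x) (abs_nonneg y) h

lemma aux_mono_of_even_qc {d : ℝ → ℝ} (hde : ∀ x, d (-x) = d x)
    (hqc : QuasiconvexOn ℝ Set.univ d) : MonotoneOn d (Set.Ici (0:ℝ)) := by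
  rw [quasiconvexOn_iff_le_max] at hqc
  obtain ⟨-, H⟩ := hqc
  intro x hx y hy hxy
  simp only [Set.mem_Ici] at hx hy
  rcases eq_or_lt_of_le hy with h0 | h0
  · have hx0 : x = 0 := le_antisymm (by linarith) hx
    rw [hx0, ← h0]
  · have ha : (0:ℝ) ≤ (y - x) / (2 * y) := div_nonneg (by linarith) (by linarith)
    have hb : (0:ℝ) ≤ (y + x) / (2 * y) := div_nonneg (by linarith) (by linarith)
    have hab : (y - x) / (2 * y) + (y + x) / (2 * y) = 1 := by field_simp; ring
    have hpt : ((y - x) / (2 * y)) • (-y) + ((y + x) / (2 * y)) • y = x := by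
      simp only [smul_eq_mul]
      rw [div_mul_eq_mul_div, div_mul_eq_mul_div, ← add_div,
        div_eq_iff (by positivity : (2*y) ≠ 0)]
      ring
    have := H (Set.mem_univ (-y)) (Set.mem_univ y) ha hb hab
    rw [hpt, hde y, max_self] at this
    exact this

lemma aux_quasiconvexOn_comp_abs {f₀ : ℝ → ℝ} (hm : MonotoneOn f₀ (Set.Ici (0:ℝ))) :
    QuasiconvexOn ℝ Set.univ (fun x => f₀ |x|) := by
  rw [quasiconvexOn_iff_le_max]
  refine ⟨convex_univ, fun x _ y _ a b ha hb hab => ?_⟩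
  have h1 : |a • x + b • y| ≤ max |x| |y| := by
    calc |a • x + b • y| ≤ |a • x| + |b • y| := abs_add_le _ _
      _ = a * |x| + b * |y| := by
          simp [abs_mul, abs_of_nonneg ha, abs_of_nonneg hb, smul_eq_mul]
      _ ≤ a * max |x| |y| + b * max |x| |y| := by
          gcongr
          · exact le_max_left _ _
          · exact le_max_right _ _
      _ = max |x| |y| := by rw [← add_mul, hab, one_mul]
  have hmax : (0:ℝ) ≤ max |x| |y| := le_trans (abs_nonneg x) (le_max_left _ _)
  have h2 : f₀ |a • x + b • y| ≤ f₀ (max |x| |y|) := hm (Set.mem_Ici.2 (abs_nonneg _)) hmax h1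
  rcases le_total |x| |y| with h | h
  · rw [max_eq_right h] at h2; exact h2.trans (le_max_right _ _)
  · rw [max_eq_left h] at h2; exact h2.trans (le_max_left _ _)

lemma aux_measurable_inf' {ι : Type*} (s : Finset ι) (hs : s.Nonempty) (F : ι → ℝ → ℝ)
    (hF : ∀ u ∈ s, Measurable (F u)) :
    Measurable (fun e => s.inf' hs (fun u => F u e)) := by
  have h : (fun e => s.inf' hs (fun u => F u e)) = s.inf' hs F := by
    funext e
    exact (Finset.inf'_apply hs F e).symm
  rw [h]
  exact Finset.inf'_induction hs F (fun f hf g hg => hf.inf hg) hF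

lemma aux_conv_nice (μ : ℝ → ℝ) (hμmeas : Measurable μ) (hμnn : ∀ x, 0 ≤ μ x)
    (hμint : Integrable μ) (hμone : ∫ x : ℝ, μ x = 1)
    (hμeven : ∀ x, μ (-x) = μ x) (hμmono : AntitoneOn μ (Set.Ici (0:ℝ)))
    (g : ℝ → ℝ) (hgmeas : Measurable g) (K : ℝ) (hgbd : ∀ x, |g x| ≤ K)
    (hgeven : ∀ x, g (-x) = g x) (hgmono : MonotoneOn g (Set.Ici (0:ℝ))) :
    (∀ e : ℝ, (fun e : ℝ => ∫ w : ℝ, g (e + w) * μ w) (-e)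
        = (fun e : ℝ => ∫ w : ℝ, g (e + w) * μ w) e) ∧
    MonotoneOn (fun e : ℝ => ∫ w : ℝ, g (e + w) * μ w) (Set.Ici (0:ℝ)) ∧
    Measurable (fun e : ℝ => ∫ w : ℝ, g (e + w) * μ w) ∧
    (∀ e : ℝ, |∫ w : ℝ, g (e + w) * μ w| ≤ K) := by
  have hint : ∀ e : ℝ, Integrable (fun w => g (e + w) * μ w) := by
    intro e
    exact hμint.bdd_mul (c := K) ((hgmeas.comp (measurable_const_add e)).aestronglyMeasurable)
      (ae_of_all _ fun w => by simpa [Real.norm_eq_abs] using hgbd (e + w))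
  refine ⟨?_, ?_, ?_, ?_⟩
  · -- even
    intro e
    simp only []
    have h1 := integral_neg_eq_self (fun w => g (-e + w) * μ w) (volume : Measure ℝ)
    rw [← h1]
    congr 1
    funext w
    rw [show -e + -w = -(e + w) by ring, hgeven, hμeven]
  · -- monotone
    intro e1 he1 e2 he2 h12
    simp only [Set.mem_Ici] at he1 he2
    simp only []
    set φ : ℝ → ℝ := fun w => (g (e2 + w) - g (e1 + w)) * μ w with hφ
    have Iφ : Integrable φ := by
      have := (hint e2).sub (hint e1)
      simpa [hφ, sub_mul, Pi.sub_def] using this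
    have Iτ : Integrable (fun w => φ (-(e1 + e2) - w)) := Iφ.comp_sub_left _
    have key : ∀ w : ℝ, 0 ≤ φ w + φ (-(e1 + e2) - w) := by
      intro w
      have h1 : e2 + (-(e1 + e2) - w) = -(e1 + w) := by ring
      have h2 : e1 + (-(e1 + e2) - w) = -(e2 + w) := by ring
      have h3 : -(e1 + e2) - w = -(e1 + e2 + w) := by ring
      have k1 : g (e2 + (-(e1 + e2) - w)) = g (e1 + w) := by rw [h1, hgeven]
      have k2 : g (e1 + (-(e1 + e2) - w)) = g (e2 + w) := by rw [h2, hgeven]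
      have k3 : μ (-(e1 + e2) - w) = μ (e1 + e2 + w) := by rw [h3, hμeven]
      simp only [hφ, k1, k2, k3]
      rcases le_total (e1 + e2 + 2*w) 0 with hw | hw
      · have hΔ : g (e2 + w) ≤ g (e1 + w) :=
          aux_evenMono_le hgeven hgmono (aux_abs_le_abs_of_sq _ _ (by nlinarith))
        have hμ' : μ w ≤ μ (e1 + e2 + w) := by
          have : |e1 + e2 + w| ≤ |w| := aux_abs_le_abs_of_sq _ _ (by nlinarith)
          exact aux_evenAnti_le hμeven hμmono this
        nlinarith [mul_nonneg (sub_nonneg.2 hΔ) (sub_nonneg.2 hμ')]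
      · have hΔ : g (e1 + w) ≤ g (e2 + w) :=
          aux_evenMono_le hgeven hgmono (aux_abs_le_abs_of_sq _ _ (by nlinarith))
        have hμ' : μ (e1 + e2 + w) ≤ μ w := by
          have : |w| ≤ |e1 + e2 + w| := aux_abs_le_abs_of_sq _ _ (by nlinarith)
          exact aux_evenAnti_le hμeven hμmono this
        nlinarith [mul_nonneg (sub_nonneg.2 hΔ) (sub_nonneg.2 hμ')]
    have hshift : (∫ w : ℝ, φ (-(e1 + e2) - w)) = ∫ w : ℝ, φ w :=
      integral_sub_left_eq_self φ (volume : Measure ℝ) (-(e1 + e2))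
    have h2 : 0 ≤ ∫ w : ℝ, (φ w + φ (-(e1 + e2) - w)) := integral_nonneg key
    rw [integral_add Iφ Iτ, hshift] at h2
    have hsub : (∫ w : ℝ, φ w)
        = (∫ w : ℝ, g (e2 + w) * μ w) - ∫ w : ℝ, g (e1 + w) * μ w := by
      rw [← integral_sub (hint e2) (hint e1)]
      congr 1
      funext w
      simp [hφ, sub_mul]
    linarith
  · -- measurable
    have hF : Measurable (fun q : ℝ × ℝ => g (q.1 + q.2) * μ q.2) :=
      (hgmeas.comp measurable_add).mul (hμmeas.comp measurable_snd)
    exact (hF.stronglyMeasurable.integral_prod_right').measurable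
  · -- bound
    intro e
    have h1 : |∫ w : ℝ, g (e + w) * μ w| ≤ ∫ w : ℝ, |g (e + w)| * |μ w| := by
      simpa [Real.norm_eq_abs, abs_mul] using
        norm_integral_le_integral_norm (μ := (volume : Measure ℝ)) (fun w => g (e + w) * μ w)
    have Iabs : Integrable (fun w : ℝ => |g (e + w)| * |μ w|) := by
      simpa [abs_mul] using (hint e).abs
    have h2 : (∫ w : ℝ, |g (e + w)| * |μ w|) ≤ ∫ w : ℝ, K * μ w := by
      apply integral_mono Iabs (hμint.const_mul K)
      intro w
      dsimp only
      rw [abs_of_nonneg (hμnn w)]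
      exact mul_le_mul_of_nonneg_right (hgbd _) (hμnn w)
    rw [integral_const_mul, hμone, mul_one] at h2
    linarith


/-- Part 3 of Theorem 4 of the paper: in the finite-horizon dynamic program
(with a stochastically monotone channel transition matrix and drop probability
nonincreasing in the channel state), at every time `t ≤ T` and channel state
`s` there exists an optimal prescription `f : ℝ → U` (achieving the minimum of
`H̄_t(e, s, ·)` at every error `e`) that is even and quasiconvex. -/
theorem exists_even_quasiconvex_optimal_prescription
    (T n : ℕ) (a : ℝ)
    (U : Finset ℝ) (hU0 : (0 : ℝ) ∈ U) (hUnn : ∀ u ∈ U, (0 : ℝ) ≤ u)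
    (μ : ℝ → ℝ) (hμmeas : Measurable μ) (hμnn : ∀ x : ℝ, 0 ≤ μ x)
    (hμone : ∫ x : ℝ, μ x = 1)
    (hμeven : ∀ x : ℝ, μ (-x) = μ x)
    (hμmono : AntitoneOn μ (Set.Ici (0 : ℝ)))
    (d : ℝ → ℝ) (hdmeas : Measurable d) (hdnn : ∀ x : ℝ, 0 ≤ d x)
    (hdbd : ∃ C : ℝ, ∀ x : ℝ, d x ≤ C)
    (hdeven : ∀ x : ℝ, d (-x) = d x)
    (hdqc : QuasiconvexOn ℝ Set.univ d) (hd0 : d 0 = 0)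
    (lam : ℝ → ℝ) (hlam_mono : MonotoneOn lam U) (hlam0 : lam 0 = 0)
    (hlamnn : ∀ u ∈ U, 0 ≤ lam u)
    (p : Fin n → ℝ → ℝ)
    (hp0 : ∀ s : Fin n, p s 0 = 1)
    (hp01 : ∀ s : Fin n, ∀ u ∈ U, p s u ∈ Set.Icc (0 : ℝ) 1)
    (hpu : ∀ s : Fin n, ∀ u ∈ U, ∀ v ∈ U, u ≤ v → p s v ≤ p s u)
    (Q : Fin n → Fin n → ℝ)
    (hQnn : ∀ i j : Fin n, 0 ≤ Q i j)
    (hQrow : ∀ i : Fin n, ∑ j : Fin n, Q i j = 1)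
    (hQmono : ∀ i j : Fin n, j ≤ i → ∀ ℓ : Fin n,
      ∑ k ∈ Finset.univ.filter (fun k : Fin n => ℓ ≤ k), Q j k ≤
        ∑ k ∈ Finset.univ.filter (fun k : Fin n => ℓ ≤ k), Q i k)
    (hps : ∀ u ∈ U, ∀ s s' : Fin n, s ≤ s' → p s' u ≤ p s u)
    (J : ℕ → ℝ → Fin n → ℝ)
    (Hbar : ℕ → ℝ → Fin n → ℝ → ℝ)
    (hHbar : ∀ (t : ℕ) (e : ℝ) (s : Fin n) (u : ℝ),
      Hbar t e s u =
        lam u + (∑ s' : Fin n, Q s s' * p s' u) * d e +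
          ∑ s' : Fin n, Q s s' *
            ((1 - p s' u) * (∫ w : ℝ, J (t + 1) w s' * μ w) +
              p s' u * (∫ w : ℝ, J (t + 1) (a * e + w) s' * μ w)))
    (hJT : ∀ (e : ℝ) (s : Fin n), J (T + 1) e s = 0)
    (hJrec : ∀ t ≤ T, ∀ (e : ℝ) (s : Fin n),
      J t e s = U.inf' ⟨0, hU0⟩ (Hbar t e s)) :
    ∀ t ≤ T, ∀ s : Fin n,
      ∃ f : ℝ → ℝ,
        (∀ e : ℝ, f e ∈ U) ∧
        (∀ e : ℝ, Hbar t e s (f e) = U.inf' ⟨0, hU0⟩ (Hbar t e s)) ∧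
        (∀ x : ℝ, f (-x) = f x) ∧
        QuasiconvexOn ℝ Set.univ f := by
  classical
  have hμint : Integrable μ := by
    by_contra hc
    rw [integral_undef hc] at hμone
    norm_num at hμone
  obtain ⟨C, hC⟩ := hdbd
  have hdmono : MonotoneOn d (Set.Ici (0:ℝ)) := aux_mono_of_even_qc hdeven hdqc
  have hUne : U.Nonempty := ⟨0, hU0⟩
  have hΛle : ∀ u ∈ U, |lam u| ≤ U.sup' hUne (fun u => |lam u|) :=
    fun u hu => Finset.le_sup' (fun u => |lam u|) hu
  set Λ : ℝ := U.sup' hUne (fun u => |lam u|) with hΛ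
  -- the main one-step lemma
  have step : ∀ t : ℕ, t ≤ T →
      (∀ s' : Fin n, Measurable (fun e => J (t+1) e s') ∧
        (∀ x, J (t+1) (-x) s' = J (t+1) x s') ∧
        MonotoneOn (fun e => J (t+1) e s') (Set.Ici (0:ℝ)) ∧
        ∃ K : ℝ, ∀ x, |J (t+1) x s'| ≤ K) →
      ∀ s : Fin n,
        (Measurable (fun e => J t e s) ∧
          (∀ x, J t (-x) s = J t x s) ∧
          MonotoneOn (fun e => J t e s) (Set.Ici (0:ℝ)) ∧
          ∃ K : ℝ, ∀ x, |J t x s| ≤ K) ∧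
        (∃ f : ℝ → ℝ,
          (∀ e : ℝ, f e ∈ U) ∧
          (∀ e : ℝ, Hbar t e s (f e) = U.inf' ⟨0, hU0⟩ (Hbar t e s)) ∧
          (∀ x : ℝ, f (-x) = f x) ∧
          QuasiconvexOn ℝ Set.univ f) := by
    intro t htT hN s
    choose hJm hJe hJmono hJbd using hN
    choose K hK using hJbd
    have hconv := fun s' : Fin n => aux_conv_nice μ hμmeas hμnn hμint hμone hμeven hμmono
      (fun x => J (t+1) x s') (hJm s') (K s') (hK s') (hJe s') (hJmono s')
    -- facts about B s' e := ∫ w, J (t+1) (a*e + w) s' * μ w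
    have hBeven : ∀ (s' : Fin n) (e : ℝ),
        (∫ w : ℝ, J (t+1) (a * (-e) + w) s' * μ w) = ∫ w : ℝ, J (t+1) (a * e + w) s' * μ w := by
      intro s' e
      have h1 := (hconv s').1 (a * e)
      simpa [mul_neg] using h1
    have hBmono : ∀ (s' : Fin n) (e1 e2 : ℝ), 0 ≤ e1 → e1 ≤ e2 →
        (∫ w : ℝ, J (t+1) (a * e1 + w) s' * μ w) ≤ ∫ w : ℝ, J (t+1) (a * e2 + w) s' * μ w := by
      intro s' e1 e2 he1 h12
      have habs : |a * e1| ≤ |a * e2| := by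
        rw [abs_mul, abs_mul, abs_of_nonneg he1, abs_of_nonneg (he1.trans h12)]
        exact mul_le_mul_of_nonneg_left h12 (abs_nonneg a)
      exact aux_evenMono_le (hconv s').1 (hconv s').2.1 habs
    have hBmeas : ∀ s' : Fin n,
        Measurable (fun e : ℝ => ∫ w : ℝ, J (t+1) (a * e + w) s' * μ w) :=
      fun s' => ((hconv s').2.2.1).comp (measurable_const_mul a)
    have hBbd : ∀ (s' : Fin n) (e : ℝ),
        |∫ w : ℝ, J (t+1) (a * e + w) s' * μ w| ≤ K s' :=
      fun s' e => (hconv s').2.2.2 (a * e)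
    have hAbd : ∀ s' : Fin n, |∫ w : ℝ, J (t+1) w s' * μ w| ≤ K s' := by
      intro s'
      have := (hconv s').2.2.2 0
      simpa using this
    -- representation of Hbar
    have hrep : ∀ (e u : ℝ), Hbar t e s u =
        (lam u + ∑ s' : Fin n, Q s s' * ((1 - p s' u) * (∫ w : ℝ, J (t+1) w s' * μ w)))
          + ∑ s' : Fin n, Q s s' *
              (p s' u * (d e + ∫ w : ℝ, J (t+1) (a * e + w) s' * μ w)) := by
      intro e u
      rw [hHbar, Finset.sum_mul, add_assoc, ← Finset.sum_add_distrib,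
        add_assoc, ← Finset.sum_add_distrib]
      congr 1
      exact Finset.sum_congr rfl (fun s' _ => by ring)
    -- evenness of Hbar in e
    have hHeven : ∀ (e u : ℝ), Hbar t (-e) s u = Hbar t e s u := by
      intro e u
      rw [hrep, hrep]
      congr 1
      exact Finset.sum_congr rfl (fun s' _ => by rw [hdeven, hBeven])
    -- monotonicity of Hbar in e on [0, ∞)
    have hHmonoE : ∀ u ∈ U, ∀ e1 e2 : ℝ, 0 ≤ e1 → e1 ≤ e2 →
        Hbar t e1 s u ≤ Hbar t e2 s u := by
      intro u hu e1 e2 he1 h12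
      rw [hrep, hrep]
      refine add_le_add_right (Finset.sum_le_sum fun s' _ => ?_) _
      refine mul_le_mul_of_nonneg_left ?_ (hQnn s s')
      refine mul_le_mul_of_nonneg_left ?_ (hp01 s' u hu).1
      exact add_le_add (hdmono (Set.mem_Ici.2 he1) (Set.mem_Ici.2 (he1.trans h12)) h12)
        (hBmono s' e1 e2 he1 h12)
    -- submodularity
    have hsubmod : ∀ v ∈ U, ∀ u ∈ U, v ≤ u → ∀ e1 e2 : ℝ, 0 ≤ e1 → e1 ≤ e2 →
        Hbar t e2 s u + Hbar t e1 s v ≤ Hbar t e1 s u + Hbar t e2 s v := by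
      intro v hv u hu hvu e1 e2 he1 h12
      rw [hrep, hrep, hrep, hrep]
      have hsum : ((∑ s' : Fin n, Q s s' *
            (p s' u * (d e2 + ∫ w : ℝ, J (t+1) (a * e2 + w) s' * μ w)))
          + ∑ s' : Fin n, Q s s' *
            (p s' v * (d e1 + ∫ w : ℝ, J (t+1) (a * e1 + w) s' * μ w)))
          ≤ (∑ s' : Fin n, Q s s' *
            (p s' u * (d e1 + ∫ w : ℝ, J (t+1) (a * e1 + w) s' * μ w)))
          + ∑ s' : Fin n, Q s s' *
            (p s' v * (d e2 + ∫ w : ℝ, J (t+1) (a * e2 + w) s' * μ w)) := by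
        rw [← Finset.sum_add_distrib, ← Finset.sum_add_distrib]
        refine Finset.sum_le_sum fun s' _ => ?_
        have h1 : p s' u ≤ p s' v := hpu s' v hv u hu hvu
        have h2 : (d e1 + ∫ w : ℝ, J (t+1) (a * e1 + w) s' * μ w)
            ≤ d e2 + ∫ w : ℝ, J (t+1) (a * e2 + w) s' * μ w :=
          add_le_add (hdmono (Set.mem_Ici.2 he1) (Set.mem_Ici.2 (he1.trans h12)) h12)
            (hBmono s' e1 e2 he1 h12)
        nlinarith [mul_nonneg (mul_nonneg (hQnn s s') (sub_nonneg.2 h1)) (sub_nonneg.2 h2)]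
      linarith
    -- existence of minimizers
    have hex : ∀ r : ℝ, ∃ u, u ∈ U ∧ Hbar t r s u = U.inf' ⟨0, hU0⟩ (Hbar t r s) := by
      intro r
      obtain ⟨u, hu, h⟩ := Finset.exists_mem_eq_inf' (⟨0, hU0⟩ : U.Nonempty) (Hbar t r s)
      exact ⟨u, hu, h.symm⟩
    set Msel : ℝ → Finset ℝ :=
      fun r => U.filter (fun u => Hbar t r s u = U.inf' ⟨0, hU0⟩ (Hbar t r s)) with hMsel
    have hMne : ∀ r : ℝ, (Msel r).Nonempty := by
      intro r
      obtain ⟨u, hu, h⟩ := hex r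
      exact ⟨u, Finset.mem_filter.2 ⟨hu, h⟩⟩
    set f₀ : ℝ → ℝ := fun r => (Msel r).max' (hMne r) with hf₀
    have hf₀mem : ∀ r : ℝ, f₀ r ∈ U ∧ Hbar t r s (f₀ r) = U.inf' ⟨0, hU0⟩ (Hbar t r s) :=
      fun r => Finset.mem_filter.1 ((Msel r).max'_mem (hMne r))
    have hf₀mono : ∀ r1 r2 : ℝ, 0 ≤ r1 → r1 ≤ r2 → f₀ r1 ≤ f₀ r2 := by
      intro r1 r2 h0 h12
      by_contra hcon
      push_neg at hcon
      have h1 := hf₀mem r1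
      have h2 := hf₀mem r2
      have ha : Hbar t r1 s (f₀ r1) ≤ Hbar t r1 s (f₀ r2) :=
        h1.2 ▸ Finset.inf'_le _ h2.1
      have hb := hsubmod (f₀ r2) h2.1 (f₀ r1) h1.1 hcon.le r1 r2 h0 h12
      have hc2 : Hbar t r2 s (f₀ r1) ≤ Hbar t r2 s (f₀ r2) := by linarith
      have hmem : f₀ r1 ∈ Msel r2 := Finset.mem_filter.2 ⟨h1.1,
        le_antisymm (hc2.trans_eq h2.2) (Finset.inf'_le _ h1.1)⟩
      exact absurd (Finset.le_max' _ _ hmem) (not_le.2 hcon)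
    have habs : ∀ (e u : ℝ), Hbar t e s u = Hbar t |e| s u := by
      intro e u
      rcases abs_cases e with ⟨h1, _⟩ | ⟨h1, _⟩
      · rw [h1]
      · rw [h1]
        exact (hHeven e u).symm
    have hinf_abs : ∀ e : ℝ, U.inf' ⟨0, hU0⟩ (Hbar t e s) = U.inf' ⟨0, hU0⟩ (Hbar t |e| s) :=
      fun e => Finset.inf'_congr (⟨0, hU0⟩ : U.Nonempty) rfl (fun u _ => habs e u)
    constructor
    · -- niceness of J t
      have hJt : ∀ e : ℝ, J t e s = U.inf' ⟨0, hU0⟩ (Hbar t e s) := fun e => hJrec t htT e s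
      have hHu : ∀ u : ℝ, Measurable (fun e => Hbar t e s u) := by
        intro u
        have heq : (fun e => Hbar t e s u) = fun e =>
            (lam u + ∑ s' : Fin n, Q s s' * ((1 - p s' u) * (∫ w : ℝ, J (t+1) w s' * μ w)))
              + ∑ s' : Fin n, Q s s' *
                  (p s' u * (d e + ∫ w : ℝ, J (t+1) (a * e + w) s' * μ w)) :=
          funext fun e => hrep e u
        rw [heq]
        exact measurable_const.add
          (Finset.measurable_sum _ fun s' _ =>
            (measurable_const.mul (measurable_const.mul (hdmeas.add (hBmeas s')))))
      refine ⟨?_, ?_, ?_, ?_⟩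
      · have : (fun e => J t e s) = fun e => U.inf' ⟨0, hU0⟩ (fun u => Hbar t e s u) := by
          funext e
          exact hJt e
        rw [this]
        exact aux_measurable_inf' U ⟨0, hU0⟩ (fun u e => Hbar t e s u) (fun u _ => hHu u)
      · intro x
        rw [hJt, hJt]
        exact Finset.inf'_congr (⟨0, hU0⟩ : U.Nonempty) rfl (fun u _ => hHeven x u)
      · intro e1 he1 e2 he2 h12
        simp only [Set.mem_Ici] at he1 he2
        show J t e1 s ≤ J t e2 s
        rw [hJt, hJt]
        refine Finset.le_inf' _ _ fun u hu => ?_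
        exact (Finset.inf'_le _ hu).trans (hHmonoE u hu e1 e2 he1 h12)
      · -- boundedness
        refine ⟨Λ + ((∑ s' : Fin n, Q s s' * K s') + ∑ s' : Fin n, Q s s' * (C + K s')),
          fun e => ?_⟩
        have hHbd : ∀ u ∈ U, |Hbar t e s u| ≤
            Λ + ((∑ s' : Fin n, Q s s' * K s') + ∑ s' : Fin n, Q s s' * (C + K s')) := by
          intro u hu
          rw [hrep]
          have hX : |lam u + ∑ s' : Fin n, Q s s' *
              ((1 - p s' u) * (∫ w : ℝ, J (t+1) w s' * μ w))|
              ≤ Λ + ∑ s' : Fin n, Q s s' * K s' := by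
            refine (abs_add_le _ _).trans (add_le_add (hΛle u hu) ?_)
            refine (Finset.abs_sum_le_sum_abs _ _).trans (Finset.sum_le_sum fun s' _ => ?_)
            rw [abs_mul, abs_of_nonneg (hQnn s s'), abs_mul]
            have hp' := hp01 s' u hu
            have h1p : |1 - p s' u| ≤ 1 := by
              rw [abs_of_nonneg (by linarith [hp'.2])]
              linarith [hp'.1]
            have hKnn : (0:ℝ) ≤ K s' := le_trans (abs_nonneg _) (hAbd s')
            refine mul_le_mul_of_nonneg_left ?_ (hQnn s s')
            nlinarith [mul_le_mul h1p (hAbd s') (abs_nonneg _) zero_le_one]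
          have hY : |∑ s' : Fin n, Q s s' *
              (p s' u * (d e + ∫ w : ℝ, J (t+1) (a * e + w) s' * μ w))|
              ≤ ∑ s' : Fin n, Q s s' * (C + K s') := by
            refine (Finset.abs_sum_le_sum_abs _ _).trans (Finset.sum_le_sum fun s' _ => ?_)
            rw [abs_mul, abs_of_nonneg (hQnn s s'), abs_mul]
            have hp' := hp01 s' u hu
            have hpabs : |p s' u| ≤ 1 := by rw [abs_of_nonneg hp'.1]; exact hp'.2
            have hGbd : |d e + ∫ w : ℝ, J (t+1) (a * e + w) s' * μ w| ≤ C + K s' := by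
              refine (abs_add_le _ _).trans (add_le_add ?_ (hBbd s' e))
              rw [abs_of_nonneg (hdnn e)]
              exact hC e
            have h0 : (0:ℝ) ≤ C + K s' :=
              le_trans (abs_nonneg _) hGbd
            refine mul_le_mul_of_nonneg_left ?_ (hQnn s s')
            nlinarith [mul_le_mul hpabs hGbd (abs_nonneg _) zero_le_one]
          calc |(lam u + ∑ s' : Fin n, Q s s' *
                ((1 - p s' u) * (∫ w : ℝ, J (t+1) w s' * μ w)))
              + ∑ s' : Fin n, Q s s' *
                (p s' u * (d e + ∫ w : ℝ, J (t+1) (a * e + w) s' * μ w))|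
              ≤ _ + _ := abs_add_le _ _
            _ ≤ Λ + ((∑ s' : Fin n, Q s s' * K s') + ∑ s' : Fin n, Q s s' * (C + K s')) := by
                linarith
        rw [hJt, abs_le]
        constructor
        · refine Finset.le_inf' _ _ fun u hu => ?_
          linarith [(abs_le.1 (hHbd u hu)).1]
        · exact (Finset.inf'_le _ hU0).trans (abs_le.1 (hHbd 0 hU0)).2
    · -- the optimal prescription
      refine ⟨fun e => f₀ |e|, fun e => (hf₀mem |e|).1, fun e => ?_, fun x => by show f₀ |(-x)| = f₀ |x|; rw [abs_neg],
        aux_quasiconvexOn_comp_abs (fun r1 hr1 r2 _ h => hf₀mono r1 r2 hr1 h)⟩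
      rw [habs e (f₀ |e|), (hf₀mem |e|).2, hinf_abs e]
  -- base case niceness
  have base : ∀ s' : Fin n, Measurable (fun e => J (T+1) e s') ∧
      (∀ x, J (T+1) (-x) s' = J (T+1) x s') ∧
      MonotoneOn (fun e => J (T+1) e s') (Set.Ici (0:ℝ)) ∧
      ∃ K : ℝ, ∀ x, |J (T+1) x s'| ≤ K := by
    intro s'
    have h0 : (fun e => J (T+1) e s') = fun _ => (0:ℝ) := funext fun e => hJT e s'
    refine ⟨by rw [h0]; exact measurable_const, fun x => by rw [hJT, hJT], ?_, ⟨0, fun x => by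
      rw [hJT]; simp⟩⟩
    intro x _ y _ _
    show J (T+1) x s' ≤ J (T+1) y s'
    rw [hJT, hJT]
  -- descending induction
  have nice : ∀ m t : ℕ, t + m = T + 1 →
      ∀ s' : Fin n, Measurable (fun e => J t e s') ∧
        (∀ x, J t (-x) s' = J t x s') ∧
        MonotoneOn (fun e => J t e s') (Set.Ici (0:ℝ)) ∧
        ∃ K : ℝ, ∀ x, |J t x s'| ≤ K := by
    intro m
    induction m with
    | zero =>
      intro t ht
      have : t = T + 1 := by omega
      subst this
      exact base
    | succ k ih =>
      intro t ht s'
      have ht' : (t + 1) + k = T + 1 := by omega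
      have htT : t ≤ T := by omega
      exact (step t htT (fun s'' => ih (t + 1) ht' s'') s').1
  intro t ht s
  exact (step t ht (fun s'' => nice (T - t) (t + 1) (by omega) s'') s).2
end

section
/- Let μ : ℝ → [0,∞) be Lebesgue-integrable, even, and nonincreasing on [0,∞), with cumulative distribution function 𝓜(x) = ∫_{(−∞, x]} μ(w) dw. Fix y ≥ 0 and a ∈ ℝ, and let P : ℝ → [0,1] be nonincreasing. Define M(e, u) = 1 − P(u) · ( 𝓜(y − a·e) + 𝓜(y + a·e) ) − (1 − P(u)) · 2𝓜(y). Then M(e, u) is submodular in (e, u) on [0,∞) × ℝ: for all 0 ≤ e₁ ≤ e₂ and all u₁ ≤ u₂, M(e₁, u₁) + M(e₂, u₂) ≤ M(e₁, u₂) + M(e₂, u₁). Moreover, for each fixed u, M(e, u) is nondecreasing in e on [0,∞). -/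
open MeasureTheory

lemma tail_key (μ : ℝ → ℝ) (hint : Integrable μ) (hnn : ∀ x : ℝ, 0 ≤ μ x)
    (heven : ∀ x : ℝ, μ (-x) = μ x)
    (hmono : AntitoneOn μ (Set.Ici (0 : ℝ)))
    (y : ℝ) (hy : 0 ≤ y) {δ₁ δ₂ : ℝ} (h0 : 0 ≤ δ₁) (h12 : δ₁ ≤ δ₂) :
    (∫ w in Set.Iic (y - δ₂), μ w) + ∫ w in Set.Iic (y + δ₂), μ w ≤
      (∫ w in Set.Iic (y - δ₁), μ w) + ∫ w in Set.Iic (y + δ₁), μ w := by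
  have hI : ∀ c : ℝ, IntegrableOn μ (Set.Iic c) := fun c => hint.integrableOn
  have h1 : ((∫ w in Set.Iic (y + δ₂), μ w) - ∫ w in Set.Iic (y + δ₁), μ w)
      = ∫ x in (y + δ₁)..(y + δ₂), μ x := intervalIntegral.integral_Iic_sub_Iic (hI _) (hI _)
  have h2 : ((∫ w in Set.Iic (y - δ₁), μ w) - ∫ w in Set.Iic (y - δ₂), μ w)
      = ∫ x in (y - δ₂)..(y - δ₁), μ x := intervalIntegral.integral_Iic_sub_Iic (hI _) (hI _)
  have h3 : (∫ x in (y - δ₂)..(y - δ₁), μ x)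
      = ∫ x in (y + δ₁)..(y + δ₂), μ (2 * y - x) := by
    rw [intervalIntegral.integral_comp_sub_left μ (2 * y)]
    ring_nf
  have h4 : (∫ x in (y + δ₁)..(y + δ₂), μ x)
      ≤ ∫ x in (y + δ₁)..(y + δ₂), μ (2 * y - x) := by
    apply intervalIntegral.integral_mono_on (by linarith)
    · exact hint.intervalIntegrable
    · have : Integrable (fun x => μ (2 * y - x)) := hint.comp_sub_left (2 * y)
      exact this.intervalIntegrable
    · intro x hx
      obtain ⟨hx1, hx2⟩ := hx
      have hxy : y ≤ x := by linarith
      have hx0 : (0:ℝ) ≤ x := le_trans hy hxy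
      have habs : |2 * y - x| ≤ x := by
        rw [abs_le]; constructor <;> linarith
      have h5 : μ x ≤ μ |2 * y - x| :=
        hmono (Set.mem_Ici.mpr (abs_nonneg _)) (Set.mem_Ici.mpr hx0) habs
      rcases abs_cases (2 * y - x) with ⟨h, _⟩ | ⟨h, _⟩
      · rwa [h] at h5
      · rw [h] at h5; rwa [heven] at h5
  linarith [h3 ▸ h4, h1, h2]

/-- Verification of conditions (C3) and (C5) of the paper: with an integrable,
even noise density `μ` nonincreasing on `[0,∞)` with CDF `𝓜`, `y ≥ 0`, and a
nonincreasing average drop probability `P : ℝ → [0,1]`, the tail function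
`M(e,u) = 1 - P u * (𝓜 (y - a e) + 𝓜 (y + a e)) - (1 - P u) * 2 𝓜 y`
is submodular in `(e,u)` on `[0,∞) × ℝ` and nondecreasing in `e` on `[0,∞)`. -/
theorem tail_function_submodular_and_monotone (μ : ℝ → ℝ)
    (hint : Integrable μ) (hnn : ∀ x : ℝ, 0 ≤ μ x)
    (heven : ∀ x : ℝ, μ (-x) = μ x)
    (hmono : AntitoneOn μ (Set.Ici (0 : ℝ)))
    (𝓜 : ℝ → ℝ) (h𝓜 : ∀ x : ℝ, 𝓜 x = ∫ w in Set.Iic x, μ w)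
    (y a : ℝ) (hy : 0 ≤ y)
    (P : ℝ → ℝ) (hP : Antitone P)
    (hP01 : ∀ u : ℝ, P u ∈ Set.Icc (0 : ℝ) 1)
    (M : ℝ → ℝ → ℝ)
    (hM : ∀ e u : ℝ,
      M e u = 1 - P u * (𝓜 (y - a * e) + 𝓜 (y + a * e)) - (1 - P u) * (2 * 𝓜 y)) :
    (∀ e₁ e₂ u₁ u₂ : ℝ, 0 ≤ e₁ → e₁ ≤ e₂ → u₁ ≤ u₂ →
        M e₁ u₁ + M e₂ u₂ ≤ M e₁ u₂ + M e₂ u₁) ∧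
      (∀ u : ℝ, MonotoneOn (fun e : ℝ => M e u) (Set.Ici (0 : ℝ))) := by
  -- key monotonicity: the symmetric sum is nonincreasing in e on [0,∞)
  have key : ∀ e₁ e₂ : ℝ, 0 ≤ e₁ → e₁ ≤ e₂ →
      𝓜 (y - a * e₂) + 𝓜 (y + a * e₂) ≤ 𝓜 (y - a * e₁) + 𝓜 (y + a * e₁) := by
    intro e₁ e₂ he₁ he₁₂
    have he₂ : 0 ≤ e₂ := le_trans he₁ he₁₂
    have habs : |a * e₁| ≤ |a * e₂| := by
      rw [abs_mul, abs_mul, abs_of_nonneg he₁, abs_of_nonneg he₂]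
      exact mul_le_mul_of_nonneg_left he₁₂ (abs_nonneg a)
    have base := tail_key μ hint hnn heven hmono y hy (abs_nonneg (a * e₁)) habs
    have hsym : ∀ t : ℝ, 𝓜 (y - t) + 𝓜 (y + t) = 𝓜 (y - |t|) + 𝓜 (y + |t|) := by
      intro t
      rcases abs_cases t with ⟨h, _⟩ | ⟨h, _⟩
      · rw [h]
      · rw [h]; ring_nf
    rw [hsym (a * e₁), hsym (a * e₂), h𝓜, h𝓜, h𝓜, h𝓜]
    linarith [base]
  constructor
  · intro e₁ e₂ u₁ u₂ he₁ he₁₂ hu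
    have hPu := hP hu
    have hg := key e₁ e₂ he₁ he₁₂
    simp only [hM]
    nlinarith [mul_nonneg (sub_nonneg.2 hPu) (sub_nonneg.2 hg)]
  · intro u e₁ he₁ e₂ he₂ h12
    have hg := key e₁ e₂ he₁ h12
    have hP0 := (hP01 u).1
    simp only [hM]
    nlinarith [mul_le_mul_of_nonneg_left hg hP0]
end
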